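/- arXiv:1601.02844 — 5 statements merged into one kernel-verified Lean document; each statement's English description precedes it below -/
import Mathlib

section
/- Let p be a positive integer with p ≤ n, assume E|ε₁| < ∞, and let ψ₁, …, ψ_K : S → ℝ be bounded measurable functions with β_k = ∫_S f·ψ_k dμ for k = 1, …, K. Define the U-statistic Θ̂(p) = binom(n,p)^{−1} Σ_{k=1}^K Σ_{U ⊆ {1,…,n}, |U| = p} ∏_{i ∈ U} Y_i ψ_k(X_i). Then Θ̂(p) is an unbiased estimator of Θ(p) := Σ_{k=1}^K β_k^p, i.e., E[Θ̂(p)] = Σ_{k=1}^K β_k^p. -/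
open MeasureTheory ProbabilityTheory

lemma aux_integral_prod {Ω ι : Type*} [MeasurableSpace Ω] {P : Measure Ω}
    [IsProbabilityMeasure P] {g : ι → Ω → ℝ}
    (hindep : iIndepFun g P)
    (hmeas : ∀ i, Measurable (g i)) (hint : ∀ i, Integrable (g i) P) (s : Finset ι) :
    Integrable (fun ω => ∏ i ∈ s, g i ω) P ∧
    ∫ ω, ∏ i ∈ s, g i ω ∂P = ∏ i ∈ s, ∫ ω, g i ω ∂P := by
  classical
  induction s using Finset.cons_induction with
  | empty => simp
  | cons i s hi ih =>
    have hIF : IndepFun (g i) (fun ω => ∏ j ∈ s, g j ω) P := by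
      have h := (hindep.indepFun_finsetProd_of_notMem hmeas hi).symm
      have hprod : (∏ j ∈ s, g j) = fun ω => ∏ j ∈ s, g j ω := by
        funext ω; simp
      rwa [hprod] at h
    have hintP : Integrable (fun ω => g i ω * ∏ j ∈ s, g j ω) P :=
      hIF.integrable_mul (hint i) ih.1
    have hmul : ∫ ω, g i ω * ∏ j ∈ s, g j ω ∂P
        = (∫ ω, g i ω ∂P) * ∫ ω, ∏ j ∈ s, g j ω ∂P :=
      hIF.integral_mul_eq_mul_integral (hint i).aestronglyMeasurable ih.1.aestronglyMeasurable
    constructor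
    · simpa only [Finset.prod_cons] using hintP
    · calc ∫ ω, ∏ x ∈ Finset.cons i s hi, g x ω ∂P
          = ∫ ω, g i ω * ∏ j ∈ s, g j ω ∂P := by simp only [Finset.prod_cons]
        _ = (∫ ω, g i ω ∂P) * ∫ ω, ∏ j ∈ s, g j ω ∂P := hmul
        _ = ∏ x ∈ Finset.cons i s hi, ∫ ω, g x ω ∂P := by
            rw [ih.2, Finset.prod_cons]

/-- **Unbiasedness of the global-thresholding U-statistic.**
For a positive integer `p ≤ n`, bounded measurable functions `ψ₁, …, ψ_K` with
coefficients `β_k = ∫ f ψ_k dμ`, the U-statistic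
`Θ̂(p) = binom(n,p)⁻¹ ∑ₖ ∑_{U ⊆ {1,…,n}, |U|=p} ∏_{i ∈ U} Yᵢ ψ_k(Xᵢ)`
is an unbiased estimator of `Θ(p) = ∑ₖ β_k ^ p`. -/
theorem unbiased_U_statistic
    {Ω : Type*} [MeasurableSpace Ω] (P : Measure Ω) [IsProbabilityMeasure P]
    {S : Type*} [MeasurableSpace S] (μ : Measure S) [IsProbabilityMeasure μ]
    (n p K : ℕ) (hp : 0 < p) (hpn : p ≤ n)
    (X : Fin n → Ω → S) (ε : Fin n → Ω → ℝ)
    (hXmeas : ∀ i, Measurable (X i)) (hεmeas : ∀ i, Measurable (ε i))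
    -- the pairs (Xᵢ, εᵢ) are mutually independent
    (hindep : iIndepFun (fun i ω => (X i ω, ε i ω)) P)
    -- within each pair, Xᵢ and εᵢ are independent
    (hXε : ∀ i, IndepFun (X i) (ε i) P)
    -- the Xᵢ are identically distributed with law μ
    (hXlaw : ∀ i, Measure.map (X i) P = μ)
    -- the εᵢ are identically distributed, integrable (E|ε₁| < ∞) and centered
    (hεid : ∀ i j, IdentDistrib (ε i) (ε j) P P)
    (hεint : ∀ i, Integrable (ε i) P)
    (hεmean : ∀ i, ∫ ω, ε i ω ∂P = 0)
    -- f is bounded measurable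
    (M : ℝ) (f : S → ℝ) (hf : Measurable f) (hfb : ∀ x, |f x| ≤ M)
    -- the ψ_k are bounded measurable
    (ψ : Fin K → S → ℝ) (hψmeas : ∀ k, Measurable (ψ k))
    (C : Fin K → ℝ) (hψb : ∀ k x, |ψ k x| ≤ C k)
    -- the coefficients β_k
    (β : Fin K → ℝ) (hβ : ∀ k, β k = ∫ x, f x * ψ k x ∂μ)
    -- the observations
    (Y : Fin n → Ω → ℝ) (hY : ∀ i ω, Y i ω = f (X i ω) + ε i ω) :
    ∫ ω, ((n.choose p : ℝ))⁻¹ *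
        ∑ k, ∑ U ∈ Finset.powersetCard p (Finset.univ : Finset (Fin n)),
          ∏ i ∈ U, Y i ω * ψ k (X i ω) ∂P
      = ∑ k, β k ^ p := by
  classical
  set g : Fin K → Fin n → Ω → ℝ := fun k i ω => Y i ω * ψ k (X i ω) with hg
  have hgeq : ∀ k i, g k i = fun ω => (f (X i ω) + ε i ω) * ψ k (X i ω) := by
    intro k i; funext ω; simp [hg, hY]
  -- independence for each k
  have hgindep : ∀ k, iIndepFun (g k) P := by
    intro k
    have := hindep.comp (g := fun _ (q : S × ℝ) => (f q.1 + q.2) * ψ k q.1)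
      (fun _ => ((hf.comp measurable_fst).add measurable_snd).mul
        ((hψmeas k).comp measurable_fst))
    convert this using 2 with i
    rw [hgeq k i]; rfl
  have hgmeas : ∀ k i, Measurable (g k i) := by
    intro k i
    rw [hgeq k i]
    exact (((hf.comp (hXmeas i)).add (hεmeas i)).mul ((hψmeas k).comp (hXmeas i)))
  have hψint : ∀ k i, Integrable (fun ω => ψ k (X i ω)) P := by
    intro k i
    refine (integrable_const (C k)).mono'
      (((hψmeas k).comp (hXmeas i)).aestronglyMeasurable) ?_
    filter_upwards with ω
    rw [Real.norm_eq_abs]; exact hψb k _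
  have h1int : ∀ k i, Integrable (fun ω => f (X i ω) * ψ k (X i ω)) P := by
    intro k i
    refine (integrable_const (M * C k)).mono'
      (((hf.comp (hXmeas i)).mul ((hψmeas k).comp (hXmeas i))).aestronglyMeasurable) ?_
    filter_upwards with ω
    rw [Real.norm_eq_abs, abs_mul]
    exact mul_le_mul (hfb _) (hψb _ _) (abs_nonneg _)
      ((abs_nonneg (f (X i ω))).trans (hfb _))
  have h2int : ∀ k i, Integrable (fun ω => ψ k (X i ω) * ε i ω) P := by
    intro k i
    refine (hεint i).bdd_mul (c := |C k|) (((hψmeas k).comp (hXmeas i)).aestronglyMeasurable) ?_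
    exact Filter.Eventually.of_forall (fun ω => by rw [Real.norm_eq_abs]; exact (hψb k _).trans (le_abs_self _))
  -- integrability of each g k i
  have hgint : ∀ k i, Integrable (g k i) P := by
    intro k i
    have : g k i = fun ω => f (X i ω) * ψ k (X i ω) + ψ k (X i ω) * ε i ω := by
      funext ω; rw [hgeq k i]; ring
    rw [this]
    exact (h1int k i).add (h2int k i)
  -- the mean of each g k i is β k
  have hgmean : ∀ k i, ∫ ω, g k i ω ∂P = β k := by
    intro k i
    have h2indep : IndepFun (fun ω => ψ k (X i ω)) (ε i) P :=
      (hXε i).comp (hψmeas k) measurable_id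
    have h2 : ∫ ω, ψ k (X i ω) * ε i ω ∂P
        = (∫ ω, ψ k (X i ω) ∂P) * ∫ ω, ε i ω ∂P :=
      h2indep.integral_mul_eq_mul_integral (hψint k i).aestronglyMeasurable (hεint i).aestronglyMeasurable
    have h1 : ∫ ω, f (X i ω) * ψ k (X i ω) ∂P = β k := by
      rw [hβ k, ← hXlaw i, integral_map (hXmeas i).aemeasurable (f := fun x => f x * ψ k x)
        ((hf.mul (hψmeas k)).aestronglyMeasurable)]
    calc ∫ ω, g k i ω ∂P
        = ∫ ω, (f (X i ω) * ψ k (X i ω) + ψ k (X i ω) * ε i ω) ∂P := by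
          congr 1; funext ω; rw [hgeq k i]; ring
      _ = β k := by
          rw [integral_add (h1int k i) (h2int k i), h1, h2, hεmean i,
            mul_zero, add_zero]
  -- the integral of each product term
  have hterm : ∀ k, ∀ U ∈ Finset.powersetCard p (Finset.univ : Finset (Fin n)),
      ∫ ω, ∏ i ∈ U, g k i ω ∂P = β k ^ p := by
    intro k U hU
    rw [(aux_integral_prod (hgindep k) (hgmeas k) (hgint k) U).2]
    rw [Finset.prod_congr rfl (fun i _ => hgmean k i), Finset.prod_const,
      (Finset.mem_powersetCard.mp hU).2]
  have htermint : ∀ k, ∀ U : Finset (Fin n),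
      Integrable (fun ω => ∏ i ∈ U, g k i ω) P := fun k U =>
    (aux_integral_prod (hgindep k) (hgmeas k) (hgint k) U).1
  have hchoose : (n.choose p : ℝ) ≠ 0 := by
    exact_mod_cast (Nat.choose_pos hpn).ne'
  rw [integral_const_mul, integral_finset_sum _ (fun k _ =>
    integrable_finset_sum _ (fun U _ => htermint k U))]
  have : ∀ k ∈ (Finset.univ : Finset (Fin K)),
      ∫ ω, ∑ U ∈ Finset.powersetCard p (Finset.univ : Finset (Fin n)),
        ∏ i ∈ U, g k i ω ∂P = (n.choose p : ℝ) * β k ^ p := by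
    intro k _
    rw [integral_finset_sum _ (fun U _ => htermint k U),
      Finset.sum_congr rfl (hterm k), Finset.sum_const,
      Finset.card_powersetCard, Finset.card_univ, Fintype.card_fin, nsmul_eq_mul]
  rw [Finset.sum_congr rfl this, ← Finset.mul_sum, ← mul_assoc,
    inv_mul_cancel₀ hchoose, one_mul]
end

section
/- Let n and p be positive integers with p ≤ n, let x₁, …, x_n and β be real numbers. Then Σ_{U ⊆ {1,…,n}, |U| = p} ( ∏_{i ∈ U} x_i − β^p ) = Σ_{h=1}^p binom(n−h, p−h) · β^{p−h} · Σ_{T ⊆ {1,…,n}, |T| = h} ∏_{i ∈ T} (x_i − β). (This is the Hoeffding-type decomposition identity, obtained by reversing the order of summation, used in the proof of Proposition 3.4 to write Θ̂_j(p) − Θ_j(p) as a sum of degenerate U-statistics.) -/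
open Finset

/-- Counting supersets: the number of `p`-subsets of `univ : Finset (Fin n)`
containing a fixed `h`-set `t` is `(n-h).choose (p-h)`. -/
lemma count_supersets (n p h : ℕ) (hhp : h ≤ p) (t : Finset (Fin n)) (ht : t.card = h) :
    ((Finset.powersetCard p (Finset.univ : Finset (Fin n))).filter (fun U => t ⊆ U)).card
      = (n - h).choose (p - h) := by
  classical
  have : ((Finset.powersetCard p (Finset.univ : Finset (Fin n))).filter (fun U => t ⊆ U)).card
      = (Finset.powersetCard (p - h) tᶜ).card := by
    apply Finset.card_bij (fun U _ => U \ t)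
    · intro U hU
      simp only [mem_filter, Finset.mem_powersetCard] at hU
      simp only [Finset.mem_powersetCard]
      constructor
      · intro a ha
        simp only [Finset.mem_sdiff] at ha
        simp [Finset.mem_compl, ha.2]
      · rw [Finset.card_sdiff_of_subset hU.2, hU.1.2, ht]
    · intro U hU V hV hUV
      simp only [mem_filter, Finset.mem_powersetCard] at hU hV
      have : U \ t ∪ t = V \ t ∪ t := by rw [hUV]
      rwa [Finset.sdiff_union_of_subset hU.2, Finset.sdiff_union_of_subset hV.2] at this
    · intro V hV
      simp only [Finset.mem_powersetCard] at hV
      refine ⟨V ∪ t, ?_, ?_⟩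
      · simp only [mem_filter, Finset.mem_powersetCard]
        have hdisj : Disjoint V t := by
          rw [Finset.disjoint_right]
          intro a ha hav
          have := hV.1 hav
          simp [Finset.mem_compl, ha] at this
        refine ⟨⟨Finset.subset_univ _, ?_⟩, Finset.subset_union_right⟩
        rw [Finset.card_union_of_disjoint hdisj, hV.2, ht]
        omega
      · rw [Finset.union_sdiff_right]
        apply Finset.sdiff_eq_self_of_disjoint
        rw [Finset.disjoint_right]
        intro a ha hav
        have := hV.1 hav
        simp [Finset.mem_compl, ha] at this
  rw [this, Finset.card_powersetCard, Finset.card_compl, ht, Fintype.card_fin]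

/-- **Hoeffding-type decomposition identity (proof of Proposition 3.4).**
For positive integers `p ≤ n` and reals `x₁, …, x_n`, `β`,
`∑_{U ⊆ {1,…,n}, |U|=p} (∏_{i∈U} xᵢ − β^p)
  = ∑_{h=1}^p binom(n−h, p−h) β^{p−h} ∑_{T ⊆ {1,…,n}, |T|=h} ∏_{i∈T} (xᵢ − β)`. -/
theorem hoeffding_decomposition (n p : ℕ) (hp : 0 < p) (hpn : p ≤ n)
    (x : Fin n → ℝ) (β : ℝ) :
    ∑ U ∈ Finset.powersetCard p (Finset.univ : Finset (Fin n)),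
        ((∏ i ∈ U, x i) - β ^ p)
      = ∑ h ∈ Finset.Icc 1 p, ((n - h).choose (p - h) : ℝ) * β ^ (p - h) *
          ∑ T ∈ Finset.powersetCard h (Finset.univ : Finset (Fin n)),
            ∏ i ∈ T, (x i - β) := by
  classical
  -- Step 1: expand each product via `prod_add`.
  have step1 : ∀ U ∈ Finset.powersetCard p (Finset.univ : Finset (Fin n)),
      (∏ i ∈ U, x i) - β ^ p
        = ∑ h ∈ Finset.Icc 1 p, ∑ t ∈ Finset.powersetCard h U,
            (∏ i ∈ t, (x i - β)) * β ^ (p - h) := by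
    intro U hU
    have hUcard : U.card = p := (Finset.mem_powersetCard.mp hU).2
    have hx : ∀ i ∈ U, x i = (x i - β) + β := by intro i _; ring
    rw [Finset.prod_congr rfl hx, Finset.prod_add]
    have hexp : ∀ t ∈ U.powerset,
        (∏ i ∈ t, (x i - β)) * ∏ i ∈ U \ t, β
          = (∏ i ∈ t, (x i - β)) * β ^ (p - t.card) := by
      intro t ht
      rw [Finset.prod_const, Finset.card_sdiff_of_subset (Finset.mem_powerset.mp ht), hUcard]
    rw [Finset.sum_congr rfl hexp]
    -- decompose powerset by cardinality
    rw [Finset.sum_powerset, hUcard]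
    rw [show Finset.range (p + 1) = insert 0 (Finset.Icc 1 p) by
      ext k; simp [Finset.mem_range, Finset.mem_Icc]; omega]
    rw [Finset.sum_insert (by simp)]
    have h0 : ∑ t ∈ Finset.powersetCard 0 U, (∏ i ∈ t, (x i - β)) * β ^ (p - t.card)
        = β ^ p := by
      rw [Finset.powersetCard_zero, Finset.sum_singleton]
      simp
    rw [h0, add_sub_cancel_left]
    apply Finset.sum_congr rfl
    intro h _
    apply Finset.sum_congr rfl
    intro t ht
    rw [(Finset.mem_powersetCard.mp ht).2]
  rw [Finset.sum_congr rfl step1]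
  rw [Finset.sum_comm]
  apply Finset.sum_congr rfl
  intro h hh
  have hhp : h ≤ p := (Finset.mem_Icc.mp hh).2
  -- Step 2: swap sums and count supersets.
  have key : ∀ U ∈ Finset.powersetCard p (Finset.univ : Finset (Fin n)),
      ∑ t ∈ Finset.powersetCard h U, (∏ i ∈ t, (x i - β)) * β ^ (p - h)
        = ∑ t ∈ Finset.powersetCard h (Finset.univ : Finset (Fin n)),
            if t ⊆ U then (∏ i ∈ t, (x i - β)) * β ^ (p - h) else 0 := by
    intro U hU
    rw [← Finset.sum_filter]
    congr 1
    ext t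
    simp only [Finset.mem_powersetCard, Finset.mem_filter]
    constructor
    · intro ⟨h1, h2⟩; exact ⟨⟨Finset.subset_univ _, h2⟩, h1⟩
    · intro ⟨⟨_, h2⟩, h1⟩; exact ⟨h1, h2⟩
  rw [Finset.sum_congr rfl key, Finset.sum_comm]
  rw [Finset.mul_sum]
  apply Finset.sum_congr rfl
  intro t ht
  rw [← Finset.sum_filter, Finset.sum_const]
  rw [count_supersets n p h hhp t (Finset.mem_powersetCard.mp ht).2]
  push_cast
  ring
end

section
/- Let d ≥ 1 be an integer and let σ_d denote the rotation-invariant surface measure on the unit sphere S^d ⊆ ℝ^{d+1}. For every real η > d there exists a constant C = C(η, d) > 0 such that for every ξ ∈ S^d and every real A ≥ 1, ∫_{S^d} (1 + A·‖x − ξ‖)^{−η} dσ_d(x) ≤ C · A^{−d}, where ‖·‖ is the Euclidean norm on ℝ^{d+1}. (This is the basic localization-integral estimate underlying Lemma 2.1 and the needlet L^p-norm bounds.) -/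
open MeasureTheory Metric Set
open scoped ENNReal Pointwise

lemma sphere_cap_bound (d : ℕ) :
    ∃ Cd > (0:ℝ), ∀ (ξ : sphere (0 : EuclideanSpace ℝ (Fin (d + 1))) 1) (r : ℝ), 0 < r →
      (volume : Measure (EuclideanSpace ℝ (Fin (d + 1)))).toSphere
          (Subtype.val ⁻¹' closedBall (ξ : EuclideanSpace ℝ (Fin (d + 1))) r)
        ≤ ENNReal.ofReal (Cd * r ^ d) := by
  set E := EuclideanSpace ℝ (Fin (d + 1))
  set μ : Measure E := volume
  set V : ℝ≥0∞ := μ (ball (0:E) 1) with hV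
  have hVne : V ≠ ⊤ := measure_ball_lt_top.ne
  have hVpos : 0 < V := measure_ball_pos μ _ one_pos
  have hVT : 0 < V.toReal := ENNReal.toReal_pos hVpos.ne' hVne
  have hdim : Module.finrank ℝ E = d + 1 := finrank_euclideanSpace_fin
  refine ⟨((d:ℝ)+1) * 2^(d+2) * V.toReal, by positivity, ?_⟩
  intro ξ r hr
  have hξ : ‖(ξ : E)‖ = 1 := mem_sphere_zero_iff_norm.mp ξ.2
  have hmeas : MeasurableSet (α := sphere (0:E) 1) (Subtype.val ⁻¹' closedBall (ξ : E) r) :=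
    measurable_subtype_coe measurableSet_closedBall
  rcases le_or_gt r 1 with hr1 | hr1
  · -- small radius: tube covering
    rw [Measure.toSphere_apply' μ hmeas, hdim]
    have hsub : Ioo (0:ℝ) 1 • (Subtype.val '' ((Subtype.val ⁻¹' closedBall (ξ : E) r) : Set (sphere (0:E) 1)))
        ⊆ ⋃ k ∈ Finset.range (⌊1/r⌋₊ + 1), closedBall (((k : ℝ) * r) • (ξ : E)) (2*r) := by
      rintro y ⟨t, ht, v, ⟨u, hu, rfl⟩, rfl⟩
      obtain ⟨ht0, ht1⟩ := ht
      have hur : ‖(u : E) - (ξ : E)‖ ≤ r := by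
        have h : dist (u:E) (ξ:E) ≤ r := hu
        rwa [dist_eq_norm] at h
      set k := ⌊t / r⌋₊ with hk
      have hdiv : 0 < t / r := div_pos ht0 hr
      have hkr : (k : ℝ) * r ≤ t := by
        have h := Nat.floor_le hdiv.le
        calc (k:ℝ) * r ≤ (t/r) * r := by nlinarith
        _ = t := by field_simp
      have hkr2 : t - (k:ℝ) * r < r := by
        have h : t < ((k:ℝ) + 1) * r := (div_lt_iff₀ hr).mp (Nat.lt_floor_add_one (t / r))
        nlinarith
      have hkmem : k ∈ Finset.range (⌊1/r⌋₊ + 1) := by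
        refine Finset.mem_range.mpr ?_
        have : k ≤ ⌊1/r⌋₊ := Nat.floor_le_floor (by gcongr)
        omega
      refine Set.mem_biUnion hkmem ?_
      · rw [mem_closedBall, dist_eq_norm]
        have heq : t • (u:E) - ((k:ℝ)*r) • (ξ:E)
            = t • ((u:E) - (ξ:E)) + (t - (k:ℝ)*r) • (ξ:E) := by
          simp only [smul_sub, sub_smul]; abel
        rw [heq]
        calc ‖t • ((u:E) - (ξ:E)) + (t - (k:ℝ)*r) • (ξ:E)‖
            ≤ ‖t • ((u:E) - (ξ:E))‖ + ‖(t - (k:ℝ)*r) • (ξ:E)‖ := norm_add_le _ _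
        _ = |t| * ‖(u:E) - (ξ:E)‖ + |t - (k:ℝ)*r| * 1 := by
            rw [norm_smul, norm_smul, hξ, Real.norm_eq_abs, Real.norm_eq_abs]
        _ ≤ 1 * r + r * 1 := by
            rw [abs_of_pos ht0, abs_of_nonneg (by linarith)]
            have : t * ‖(u:E) - (ξ:E)‖ ≤ 1 * r := by
              nlinarith [norm_nonneg ((u:E) - (ξ:E))]
            nlinarith
        _ = 2 * r := by ring
    calc ((d+1 : ℕ) : ℝ≥0∞) * μ (Ioo (0:ℝ) 1 • (Subtype.val '' ((Subtype.val ⁻¹' closedBall (ξ : E) r) : Set (sphere (0:E) 1))))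
        ≤ ((d+1 : ℕ) : ℝ≥0∞) * ∑ k ∈ Finset.range (⌊1/r⌋₊ + 1), μ (closedBall (((k : ℝ) * r) • (ξ : E)) (2*r)) := by
          gcongr
          exact (measure_mono hsub).trans (measure_biUnion_finset_le _ _)
    _ = ((d+1 : ℕ) : ℝ≥0∞) * (((⌊1/r⌋₊ + 1 : ℕ) : ℝ≥0∞) * (ENNReal.ofReal ((2*r) ^ (d+1)) * V)) := by
          congr 1
          rw [Finset.sum_congr rfl (fun k _ => Measure.addHaar_closedBall μ _ (by positivity : (0:ℝ) ≤ 2*r))]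
          rw [Finset.sum_const, Finset.card_range, hdim, nsmul_eq_mul]
    _ ≤ ((d+1 : ℕ) : ℝ≥0∞) * (ENNReal.ofReal (2/r) * (ENNReal.ofReal ((2*r) ^ (d+1)) * ENNReal.ofReal V.toReal)) := by
          rw [ENNReal.ofReal_toReal hVne]
          gcongr
          rw [← ENNReal.ofReal_natCast]
          apply ENNReal.ofReal_le_ofReal
          push_cast
          have h1 : (⌊1/r⌋₊ : ℝ) ≤ 1/r := Nat.floor_le (by positivity)
          have h2 : (1:ℝ) ≤ 1/r := by rw [le_div_iff₀ hr]; linarith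
          have h3 : (2:ℝ)/r = 1/r + 1/r := by ring
          linarith
    _ = ENNReal.ofReal (((d+1 : ℕ) : ℝ) * (2/r * ((2*r)^(d+1) * V.toReal))) := by
          rw [ENNReal.ofReal_mul (by positivity), ENNReal.ofReal_mul (by positivity),
            ENNReal.ofReal_mul (by positivity), ENNReal.ofReal_natCast]
    _ ≤ ENNReal.ofReal (((d:ℝ)+1) * 2^(d+2) * V.toReal * r ^ d) := by
          apply ENNReal.ofReal_le_ofReal
          have hr' : r ≠ 0 := hr.ne'
          have h3 : 2/r * ((2*r)^(d+1) * V.toReal) = 2^(d+2) * V.toReal * r^d := by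
            rw [mul_pow, pow_succ r d, pow_succ 2 (d+1)]
            field_simp
          rw [h3]
          push_cast
          apply le_of_eq
          ring
  · -- large radius
    calc μ.toSphere (Subtype.val ⁻¹' closedBall (ξ : E) r)
        ≤ μ.toSphere Set.univ := measure_mono (Set.subset_univ _)
    _ = ((d+1 : ℕ) : ℝ≥0∞) * V := by rw [Measure.toSphere_apply_univ, hdim]
    _ = ENNReal.ofReal (((d+1:ℕ):ℝ) * V.toReal) := by
          rw [ENNReal.ofReal_mul (by positivity), ENNReal.ofReal_natCast,
            ENNReal.ofReal_toReal hVne]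
    _ ≤ ENNReal.ofReal (((d:ℝ)+1) * 2^(d+2) * V.toReal * r ^ d) := by
          apply ENNReal.ofReal_le_ofReal
          have h1 : (1:ℝ) ≤ r ^ d := one_le_pow₀ hr1.le
          have h2 : (1:ℝ) ≤ 2^(d+2) := one_le_pow₀ (by norm_num)
          have key : (0:ℝ) ≤ ((d:ℝ)+1) * V.toReal * (2^(d+2)*r^d - 1) := by
            apply mul_nonneg (by positivity)
            nlinarith
          push_cast
          nlinarith [key]

/-- **Basic localization-integral estimate on the sphere (underlying Lemma 2.1).**
For the surface measure `σ_d` on the unit sphere `S^d ⊆ ℝ^{d+1}` and every `η > d`,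
there is `C = C(η, d) > 0` such that for all `ξ ∈ S^d` and all `A ≥ 1`,
`∫_{S^d} (1 + A‖x − ξ‖)^{−η} dσ_d(x) ≤ C A^{−d}`. -/
theorem sphere_localization_integral_bound (d : ℕ) (hd : 1 ≤ d) (η : ℝ) (hη : (d : ℝ) < η) :
    ∃ C > (0 : ℝ),
      ∀ (ξ : sphere (0 : EuclideanSpace ℝ (Fin (d + 1))) 1) (A : ℝ), 1 ≤ A →
        ∫ x : sphere (0 : EuclideanSpace ℝ (Fin (d + 1))) 1,
            (1 + A * ‖(x : EuclideanSpace ℝ (Fin (d + 1)))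
                - (ξ : EuclideanSpace ℝ (Fin (d + 1)))‖) ^ (-η)
            ∂((volume : Measure (EuclideanSpace ℝ (Fin (d + 1)))).toSphere)
          ≤ C * A ^ (-(d : ℝ)) := by
  obtain ⟨Cd, hCd, hcap⟩ := sphere_cap_bound d
  set E := EuclideanSpace ℝ (Fin (d + 1))
  set σ : Measure (sphere (0:E) 1) := (volume : Measure E).toSphere with hσ
  have hd1 : (1:ℝ) ≤ (d:ℝ) := by exact_mod_cast hd
  have hη0 : 0 < η := by linarith
  set q : ℝ := (2:ℝ) ^ ((d:ℝ) - η) with hq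
  have hq0 : 0 < q := Real.rpow_pos_of_pos two_pos _
  have hq1 : q < 1 := Real.rpow_lt_one_of_one_lt_of_neg one_lt_two (by linarith)
  have hq2 : (0:ℝ) < 1 - q := by linarith
  refine ⟨Cd * 2^d * (1-q)⁻¹, by positivity, ?_⟩
  intro ξ A hA
  have hA0 : 0 < A := lt_of_lt_of_le one_pos hA
  set f : sphere (0:E) 1 → ℝ := fun x => (1 + A * ‖(x:E) - (ξ:E)‖) ^ (-η) with hf
  have hfc : Continuous f := by
    apply Continuous.rpow_const
    · exact continuous_const.add
        (continuous_const.mul ((continuous_subtype_val.sub continuous_const).norm))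
    · intro x
      left
      have := norm_nonneg ((x:E) - (ξ:E))
      positivity
  have hfnn : ∀ x, 0 ≤ f x := by
    intro x
    have := norm_nonneg ((x:E) - (ξ:E))
    positivity
  set B : ℕ → Set (sphere (0:E) 1) :=
    fun j => Subtype.val ⁻¹' closedBall (ξ:E) (2^(j+1)/A) with hB
  have hBm : ∀ j, MeasurableSet (B j) :=
    fun j => measurable_subtype_coe measurableSet_closedBall
  have hpt : ∀ x, ENNReal.ofReal (f x)
      ≤ ∑' j, Set.indicator (B j) (fun _ => ENNReal.ofReal (((2:ℝ)^j)^(-η))) x := by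
    intro x
    set s : ℝ := 1 + A * ‖(x:E) - (ξ:E)‖ with hs
    have hn0 : 0 ≤ ‖(x:E) - (ξ:E)‖ := norm_nonneg _
    have hs1 : 1 ≤ s := by nlinarith
    have hs0 : 0 < s := by linarith
    set j0 := ⌊Real.logb 2 s⌋₊ with hj0
    have hlog0 : 0 ≤ Real.logb 2 s := Real.logb_nonneg one_lt_two hs1
    have h2j : (2:ℝ)^j0 ≤ s := by
      have h := Real.rpow_le_rpow_of_exponent_le one_le_two (Nat.floor_le hlog0)
      rwa [Real.rpow_natCast, Real.rpow_logb two_pos (by norm_num) hs0] at h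
    have hsj : s < 2^(j0+1) := by
      have h : (2:ℝ)^(Real.logb 2 s) < 2^((j0:ℝ)+1) :=
        Real.rpow_lt_rpow_of_exponent_lt one_lt_two (Nat.lt_floor_add_one _)
      rw [Real.rpow_logb two_pos (by norm_num) hs0] at h
      calc s < 2^((j0:ℝ)+1) := h
      _ = 2^(j0+1) := by
          rw [← Real.rpow_natCast 2 (j0+1)]
          push_cast
          ring_nf
    have hx : x ∈ B j0 := by
      simp only [hB, Set.mem_preimage, mem_closedBall, dist_eq_norm]
      rw [le_div_iff₀ hA0]
      have hdn : dist (x:E) (ξ:E) = ‖(x:E) - (ξ:E)‖ := dist_eq_norm _ _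
      rw [hdn]
      nlinarith
    calc ENNReal.ofReal (f x) ≤ ENNReal.ofReal (((2:ℝ)^j0)^(-η)) :=
          ENNReal.ofReal_le_ofReal
            (Real.rpow_le_rpow_of_nonpos (by positivity) h2j (by linarith))
    _ = Set.indicator (B j0) (fun _ => ENNReal.ofReal (((2:ℝ)^j0)^(-η))) x := by
          rw [Set.indicator_of_mem hx]
    _ ≤ _ := ENNReal.le_tsum j0
  have hid : ∀ j : ℕ, ((2:ℝ)^j)^(-η) * (Cd * ((2:ℝ)^(j+1)/A)^d)
      = (Cd * 2^d * A^(-(d:ℝ))) * q^j := by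
    intro j
    have e1 : ((2:ℝ)^j : ℝ)^(-η) = (2:ℝ)^(-((j:ℝ)*η)) := by
      rw [← Real.rpow_natCast 2 j, ← Real.rpow_mul (by norm_num)]
      ring_nf
    have e2 : ((2:ℝ)^(j+1)/A)^d = 2^((j+1)*d) / A^d := by rw [div_pow, ← pow_mul]
    have e3 : A^(-(d:ℝ)) = (A^d)⁻¹ := by
      rw [Real.rpow_neg hA0.le, Real.rpow_natCast]
    have e4 : q^j = (2:ℝ)^(((d:ℝ)-η)*(j:ℝ)) := by
      rw [hq, ← Real.rpow_natCast ((2:ℝ)^((d:ℝ)-η)) j, ← Real.rpow_mul (by norm_num)]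
    calc ((2:ℝ)^j)^(-η) * (Cd * ((2:ℝ)^(j+1)/A)^d)
        = (Cd / A^d) * ((2:ℝ)^(-((j:ℝ)*η)) * (2:ℝ)^((((j+1)*d : ℕ)):ℝ)) := by
          rw [e1, e2, ← Real.rpow_natCast 2 ((j+1)*d)]
          ring
    _ = (Cd / A^d) * (2:ℝ)^(-((j:ℝ)*η) + (((j+1)*d : ℕ)):ℝ) := by
          rw [← Real.rpow_add two_pos]
    _ = (Cd / A^d) * (2:ℝ)^((d:ℝ) + ((d:ℝ)-η)*(j:ℝ)) := by
          congr 1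
          push_cast
          ring
    _ = (Cd / A^d) * ((2:ℝ)^((d:ℝ)) * (2:ℝ)^(((d:ℝ)-η)*(j:ℝ))) := by
          rw [Real.rpow_add two_pos]
    _ = (Cd * 2^d * A^(-(d:ℝ))) * q^j := by
          rw [e3, e4, Real.rpow_natCast 2 d]
          ring
  have hKnn : 0 ≤ Cd * 2^d * A^(-(d:ℝ)) := by positivity
  have hsum : ∑' j : ℕ, ENNReal.ofReal (q^j) = ENNReal.ofReal ((1-q)⁻¹) := by
    rw [← ENNReal.ofReal_tsum_of_nonneg (fun n => by positivity)
      (summable_geometric_of_lt_one hq0.le hq1), tsum_geometric_of_lt_one hq0.le hq1]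
  have key : ∫⁻ x, ENNReal.ofReal (f x) ∂σ
      ≤ ENNReal.ofReal ((Cd * 2^d * (1-q)⁻¹) * A^(-(d:ℝ))) := by
    calc ∫⁻ x, ENNReal.ofReal (f x) ∂σ
        ≤ ∫⁻ x, ∑' j, Set.indicator (B j)
            (fun _ => ENNReal.ofReal (((2:ℝ)^j)^(-η))) x ∂σ := lintegral_mono hpt
    _ = ∑' j, ENNReal.ofReal (((2:ℝ)^j)^(-η)) * σ (B j) := by
        rw [lintegral_tsum (fun j => (measurable_const.indicator (hBm j)).aemeasurable)]
        exact tsum_congr fun j => lintegral_indicator_const (hBm j) _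
    _ ≤ ∑' j, ENNReal.ofReal (((2:ℝ)^j)^(-η)) * ENNReal.ofReal (Cd * (2^(j+1)/A)^d) := by
        gcongr with j
        exact hcap ξ _ (by positivity)
    _ = ∑' j, ENNReal.ofReal ((Cd * 2^d * A^(-(d:ℝ))) * q^j) := by
        refine tsum_congr fun j => ?_
        rw [← ENNReal.ofReal_mul (by positivity), hid j]
    _ = ENNReal.ofReal (Cd * 2^d * A^(-(d:ℝ))) * ∑' j, ENNReal.ofReal (q^j) := by
        simp_rw [ENNReal.ofReal_mul hKnn]
        rw [ENNReal.tsum_mul_left]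
    _ = ENNReal.ofReal ((Cd * 2^d * (1-q)⁻¹) * A^(-(d:ℝ))) := by
        rw [hsum, ← ENNReal.ofReal_mul hKnn]
        congr 1
        ring
  rw [show (fun x : sphere (0:E) 1 => (1 + A * ‖(x:E) - (ξ:E)‖) ^ (-η)) = f from rfl] at *
  rw [integral_eq_lintegral_of_nonneg_ae (Filter.Eventually.of_forall hfnn)
    hfc.aestronglyMeasurable]
  exact ENNReal.toReal_le_of_le_ofReal
    (mul_nonneg (mul_nonneg (mul_nonneg hCd.le (by positivity)) (inv_nonneg.2 hq2.le))
      (Real.rpow_nonneg hA0.le _)) key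
end

section
/- Let d ≥ 1 be an integer and σ_d the rotation-invariant surface measure on the unit sphere S^d ⊆ ℝ^{d+1}. Let η > d and c > 0 be reals, p ∈ [1, ∞) a real, A ≥ 1 a real, and ξ ∈ S^d. If ψ : S^d → ℝ is measurable and satisfies the localization bound |ψ(x)| ≤ c · A^{d/2} (1 + A·‖x − ξ‖)^{−η} for all x ∈ S^d, then there exists a constant C = C(c, p, η, d) > 0 (independent of A and ξ) such that ( ∫_{S^d} |ψ|^p dσ_d )^{1/p} ≤ C · A^{d(1/2 − 1/p)}. (This is the upper bound of Eq. (2.5) of the paper, the L^p-norm bound for quasi-exponentially localized kernels such as needlets, derived from the localization property Eq. (2.4).) -/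
open MeasureTheory Metric Set
open scoped Pointwise ENNReal

section Auxiliary

noncomputable abbrev sphVol (d : ℕ) : ℝ :=
  (volume (ball (0 : EuclideanSpace ℝ (Fin (d + 1))) 1)).toReal

lemma sphVol_pos (d : ℕ) : 0 < sphVol d :=
  ENNReal.toReal_pos (measure_ball_pos _ _ one_pos).ne' measure_ball_lt_top.ne

lemma cap_measurableSet (d : ℕ) (ξ : sphere (0 : EuclideanSpace ℝ (Fin (d + 1))) 1) (ρ : ℝ) :
    MeasurableSet {x : sphere (0 : EuclideanSpace ℝ (Fin (d + 1))) 1 |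
      ‖(x : EuclideanSpace ℝ (Fin (d + 1))) - (ξ : EuclideanSpace ℝ (Fin (d + 1)))‖ < ρ} := by
  have hcont : Continuous fun x : sphere (0 : EuclideanSpace ℝ (Fin (d + 1))) 1 =>
      ‖(x : EuclideanSpace ℝ (Fin (d + 1))) - (ξ : EuclideanSpace ℝ (Fin (d + 1)))‖ :=
    (continuous_subtype_val.sub continuous_const).norm
  exact measurableSet_lt hcont.measurable measurable_const

/-- Upper Ahlfors regularity of the surface measure: caps of radius ρ have measure ≲ ρ^d. -/
lemma cap_bound (d : ℕ) (ξ : sphere (0 : EuclideanSpace ℝ (Fin (d + 1))) 1) (ρ : ℝ) (hρ : 0 < ρ) :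
    (volume : Measure (EuclideanSpace ℝ (Fin (d + 1)))).toSphere
        {x | ‖(x : EuclideanSpace ℝ (Fin (d + 1))) - (ξ : EuclideanSpace ℝ (Fin (d + 1)))‖ < ρ}
      ≤ ENNReal.ofReal ((d + 1) * 2 ^ (d + 2) * sphVol d * ρ ^ d) := by
  set E := EuclideanSpace ℝ (Fin (d + 1))
  set s : Set (sphere (0 : E) 1) := {x | ‖(x : E) - (ξ : E)‖ < ρ} with hs_def
  have hdim : Module.finrank ℝ E = d + 1 := finrank_euclideanSpace_fin
  rw [Measure.toSphere_apply' _ (cap_measurableSet d ξ ρ), hdim]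
  set cone : Set E := Ioo (0 : ℝ) 1 • ((↑) '' s) with hcone_def
  -- the cone is contained in the unit ball
  have hcone_ball : cone ⊆ ball (0 : E) 1 := by
    rintro y ⟨t, ht, z, ⟨x, hx, rfl⟩, rfl⟩
    have hxs : ‖(x : E)‖ = 1 := by simpa using x.2
    simp only [mem_ball, dist_zero_right, norm_smul, Real.norm_eq_abs,
      abs_of_pos ht.1, hxs, mul_one]
    exact ht.2
  rcases le_or_gt ρ 1 with hρ1 | hρ1
  · -- cover the cone by ⌊1/ρ⌋+1 balls of radius 2ρ along the segment [0, ξ]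
    set N := ⌊1 / ρ⌋₊
    have hcover : cone ⊆ ⋃ k ∈ Finset.range (N + 1), ball (((k : ℝ) * ρ) • (ξ : E)) (2 * ρ) := by
      rintro y ⟨t, ht, z, ⟨x, hx, rfl⟩, rfl⟩
      have hxs : ‖(x : E)‖ = 1 := by simpa using x.2
      set k := ⌊t / ρ⌋₊ with hk_def
      have hkN : k ≤ N := Nat.floor_le_floor (by gcongr; exact ht.2.le)
      have hkt : (k : ℝ) * ρ ≤ t := by
        have := Nat.floor_le (show (0 : ℝ) ≤ t / ρ from div_nonneg ht.1.le hρ.le)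
        calc (k : ℝ) * ρ ≤ t / ρ * ρ := by nlinarith
          _ = t := div_mul_cancel₀ _ hρ.ne'
      have htk : t < ((k : ℝ) + 1) * ρ := by
        have := Nat.lt_floor_add_one (t / ρ)
        calc t = t / ρ * ρ := (div_mul_cancel₀ _ hρ.ne').symm
          _ < ((k : ℝ) + 1) * ρ := by nlinarith
      refine Set.mem_biUnion (Finset.mem_range.2 (Nat.lt_succ_of_le hkN)) ?_
      have h1 : ‖t • (x : E) - t • (ξ : E)‖ < ρ := by
        rw [← smul_sub, norm_smul, Real.norm_eq_abs, abs_of_pos ht.1]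
        calc t * ‖(x : E) - (ξ : E)‖ ≤ 1 * ‖(x : E) - (ξ : E)‖ := by
              have : (0:ℝ) ≤ ‖(x : E) - (ξ : E)‖ := norm_nonneg _
              nlinarith [ht.2]
          _ < ρ := by rw [one_mul]; exact hx
      have h2 : ‖t • (ξ : E) - ((k : ℝ) * ρ) • (ξ : E)‖ ≤ ρ := by
        rw [← sub_smul, norm_smul, Real.norm_eq_abs,
          abs_of_nonneg (by linarith : (0:ℝ) ≤ t - (k : ℝ) * ρ)]
        have hξ : ‖(ξ : E)‖ = 1 := by simpa using ξ.2
        rw [hξ, mul_one]; linarith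
      rw [mem_ball, dist_eq_norm]
      calc ‖t • (x : E) - ((k : ℝ) * ρ) • (ξ : E)‖
          ≤ ‖t • (x : E) - t • (ξ : E)‖ + ‖t • (ξ : E) - ((k : ℝ) * ρ) • (ξ : E)‖ :=
            norm_sub_le_norm_sub_add_norm_sub _ _ _
        _ < 2 * ρ := by linarith
    have hvol : volume cone ≤ (N + 1 : ℕ) * ENNReal.ofReal ((2 * ρ) ^ (d + 1) * sphVol d) := by
      calc volume cone ≤ ∑ k ∈ Finset.range (N + 1), volume (ball (((k : ℝ) * ρ) • (ξ : E)) (2 * ρ)) :=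
            (measure_mono hcover).trans (measure_biUnion_finset_le _ _)
        _ = (N + 1 : ℕ) * ENNReal.ofReal ((2 * ρ) ^ (d + 1) * sphVol d) := by
            have hball : ∀ c : E, volume (ball c (2 * ρ)) =
                ENNReal.ofReal ((2 * ρ) ^ (d + 1) * sphVol d) := by
              intro c
              rw [Measure.addHaar_ball volume c (by linarith : (0:ℝ) ≤ 2 * ρ), hdim,
                ENNReal.ofReal_mul (by positivity), sphVol,
                ENNReal.ofReal_toReal measure_ball_lt_top.ne]
            rw [Finset.sum_congr rfl fun k _ => hball _, Finset.sum_const,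
              Finset.card_range, nsmul_eq_mul]
    have hN : ((N : ℝ) + 1) * ρ ≤ 2 := by
      have h1 : (N : ℝ) ≤ 1 / ρ := Nat.floor_le (by positivity)
      have h2 : (1 : ℝ) ≤ 1 / ρ := by rw [le_div_iff₀ hρ]; linarith
      have : ((N : ℝ) + 1) ≤ 2 / ρ := by
        have : (2 : ℝ) / ρ = 1 / ρ + 1 / ρ := by ring
        linarith
      calc ((N : ℝ) + 1) * ρ ≤ 2 / ρ * ρ := by nlinarith
        _ = 2 := div_mul_cancel₀ _ hρ.ne'
    calc (↑(d + 1) : ℝ≥0∞) * volume cone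
        ≤ (↑(d + 1) : ℝ≥0∞) * ((N + 1 : ℕ) * ENNReal.ofReal ((2 * ρ) ^ (d + 1) * sphVol d)) :=
          mul_le_mul_right hvol _
      _ = (((d + 1) * (N + 1) : ℕ) : ℝ≥0∞) * ENNReal.ofReal ((2 * ρ) ^ (d + 1) * sphVol d) := by
          push_cast; ring
      _ = ENNReal.ofReal ((((d + 1) * (N + 1) : ℕ) : ℝ) * ((2 * ρ) ^ (d + 1) * sphVol d)) := by
          rw [← ENNReal.ofReal_natCast ((d + 1) * (N + 1)),
            ← ENNReal.ofReal_mul (by positivity)]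
      _ ≤ ENNReal.ofReal ((d + 1) * 2 ^ (d + 2) * sphVol d * ρ ^ d) := by
          apply ENNReal.ofReal_le_ofReal
          have hv := sphVol_pos d
          have hρd : (0 : ℝ) ≤ ρ ^ d := by positivity
          push_cast
          calc ((d : ℝ) + 1) * ((N : ℝ) + 1) * ((2 * ρ) ^ (d + 1) * sphVol d)
              = ((d : ℝ) + 1) * 2 ^ (d + 1) * sphVol d * ρ ^ d * (((N : ℝ) + 1) * ρ) := by
                ring
            _ ≤ ((d : ℝ) + 1) * 2 ^ (d + 1) * sphVol d * ρ ^ d * 2 := by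
                have h0 : (0 : ℝ) ≤ ((d : ℝ) + 1) * 2 ^ (d + 1) * sphVol d * ρ ^ d := by positivity
                nlinarith
            _ = ((d : ℝ) + 1) * 2 ^ (d + 2) * sphVol d * ρ ^ d := by ring
  · -- large radius: use total measure
    have hρd : (1 : ℝ) ≤ ρ ^ d := one_le_pow₀ hρ1.le
    have hv := sphVol_pos d
    calc (↑(d + 1) : ℝ≥0∞) * volume cone
        ≤ (↑(d + 1) : ℝ≥0∞) * volume (ball (0 : E) 1) :=
          mul_le_mul_right (measure_mono hcone_ball) _
      _ = ENNReal.ofReal (((d : ℝ) + 1) * sphVol d) := by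
          rw [ENNReal.ofReal_mul (by positivity), sphVol,
            ENNReal.ofReal_toReal measure_ball_lt_top.ne, ← ENNReal.ofReal_natCast (d + 1)]
          push_cast
          ring_nf
      _ ≤ ENNReal.ofReal ((d + 1) * 2 ^ (d + 2) * sphVol d * ρ ^ d) := by
          apply ENNReal.ofReal_le_ofReal
          have h2 : (1 : ℝ) ≤ 2 ^ (d + 2) := one_le_pow₀ (by norm_num)
          have h3 : (1 : ℝ) ≤ 2 ^ (d + 2) * ρ ^ d := by nlinarith
          calc ((d : ℝ) + 1) * sphVol d = ((d : ℝ) + 1) * sphVol d * 1 := by ring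
            _ ≤ ((d : ℝ) + 1) * sphVol d * (2 ^ (d + 2) * ρ ^ d) :=
                mul_le_mul_of_nonneg_left h3 (by positivity)
            _ = ((d : ℝ) + 1) * 2 ^ (d + 2) * sphVol d * ρ ^ d := by ring

lemma lintegral_localized_bound (d : ℕ) (s : ℝ) (hs : (d : ℝ) < s) (A : ℝ) (hA : 1 ≤ A)
    (ξ : sphere (0 : EuclideanSpace ℝ (Fin (d + 1))) 1) :
    ∫⁻ x, ENNReal.ofReal ((1 + A * ‖(x : EuclideanSpace ℝ (Fin (d + 1)))
          - (ξ : EuclideanSpace ℝ (Fin (d + 1)))‖) ^ (-s))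
        ∂((volume : Measure (EuclideanSpace ℝ (Fin (d + 1)))).toSphere)
      ≤ ENNReal.ofReal (((d + 1) * 2 ^ (d + 2) * sphVol d * 2 ^ d
          * (1 - (2 : ℝ) ^ ((d : ℝ) - s))⁻¹) * (A⁻¹) ^ d) := by
  set E := EuclideanSpace ℝ (Fin (d + 1))
  have hA0 : (0 : ℝ) < A := lt_of_lt_of_le one_pos hA
  set K : ℝ := (d + 1) * 2 ^ (d + 2) * sphVol d with hK_def
  have hK : 0 < K := by have := sphVol_pos d; positivity
  set w : ℝ := (2 : ℝ) ^ ((d : ℝ) - s) with hw_def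
  have hw0 : 0 < w := Real.rpow_pos_of_pos two_pos _
  have hw1 : w < 1 := Real.rpow_lt_one_of_one_lt_of_neg one_lt_two (by linarith)
  set Ej : ℕ → Set (sphere (0 : E) 1) :=
    fun j => {x | ‖(x : E) - (ξ : E)‖ < 2 ^ (j + 1) / A} with hEj_def
  have hEj_meas : ∀ j, MeasurableSet (Ej j) := fun j => cap_measurableSet d ξ _
  -- pointwise domination by a sum of indicators
  have hpt : ∀ x : sphere (0 : E) 1,
      ENNReal.ofReal ((1 + A * ‖(x : E) - (ξ : E)‖) ^ (-s))
        ≤ ∑' j : ℕ, (Ej j).indicator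
            (fun _ => ENNReal.ofReal (((2 : ℝ) ^ j) ^ (-s))) x := by
    intro x
    set r : ℝ := A * ‖(x : E) - (ξ : E)‖ with hr_def
    have hr : 0 ≤ r := by positivity
    set j₀ : ℕ := ⌊Real.logb 2 (1 + r)⌋₊ with hj₀_def
    have hlog_nonneg : 0 ≤ Real.logb 2 (1 + r) :=
      Real.logb_nonneg one_lt_two (by linarith)
    have h1r : (0 : ℝ) < 1 + r := by linarith
    have hlogb : (2 : ℝ) ^ Real.logb 2 (1 + r) = 1 + r :=
      Real.rpow_logb two_pos (by norm_num) h1r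
    have h2 : (2 : ℝ) ^ j₀ ≤ 1 + r := by
      calc ((2 : ℝ) ^ j₀ : ℝ) = (2 : ℝ) ^ (j₀ : ℝ) := (Real.rpow_natCast 2 j₀).symm
        _ ≤ (2 : ℝ) ^ Real.logb 2 (1 + r) :=
            Real.rpow_le_rpow_of_exponent_le one_lt_two.le (Nat.floor_le hlog_nonneg)
        _ = 1 + r := hlogb
    have h1 : 1 + r < (2 : ℝ) ^ (j₀ + 1) := by
      calc (1 + r : ℝ) = (2 : ℝ) ^ Real.logb 2 (1 + r) := hlogb.symm
        _ < (2 : ℝ) ^ ((j₀ : ℝ) + 1) :=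
            Real.rpow_lt_rpow_of_exponent_lt one_lt_two (Nat.lt_floor_add_one _)
        _ = (2 : ℝ) ^ (j₀ + 1) := by
            rw [← Real.rpow_natCast 2 (j₀ + 1)]; push_cast; ring_nf
    have hmem : x ∈ Ej j₀ := by
      simp only [hEj_def, Set.mem_setOf_eq]
      rw [lt_div_iff₀ hA0]
      calc ‖(x : E) - (ξ : E)‖ * A = r := by rw [hr_def]; ring
        _ < (2 : ℝ) ^ (j₀ + 1) := by linarith
    have hle : (1 + r) ^ (-s) ≤ ((2 : ℝ) ^ j₀) ^ (-s) := by
      apply Real.rpow_le_rpow_of_nonpos (by positivity) h2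
      have : (0 : ℝ) ≤ (d : ℝ) := Nat.cast_nonneg d
      linarith
    calc ENNReal.ofReal ((1 + r) ^ (-s))
        ≤ ENNReal.ofReal (((2 : ℝ) ^ j₀) ^ (-s)) := ENNReal.ofReal_le_ofReal hle
      _ = (Ej j₀).indicator (fun _ => ENNReal.ofReal (((2 : ℝ) ^ j₀) ^ (-s))) x :=
          (Set.indicator_of_mem hmem fun _ => ENNReal.ofReal (((2 : ℝ) ^ j₀) ^ (-s))).symm
      _ ≤ ∑' j : ℕ, (Ej j).indicator
            (fun _ => ENNReal.ofReal (((2 : ℝ) ^ j) ^ (-s))) x := ENNReal.le_tsum j₀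
  -- the algebraic identity for each term
  have hterm : ∀ j : ℕ, ((2 : ℝ) ^ j) ^ (-s) * (K * ((2 : ℝ) ^ (j + 1) / A) ^ d)
      = (K * 2 ^ d * (A⁻¹) ^ d) * w ^ j := by
    intro j
    have key : ((2 : ℝ) ^ j) ^ (-s) * ((2 : ℝ) ^ ((j + 1) * d)) = 2 ^ d * w ^ j := by
      rw [← Real.rpow_natCast 2 j, ← Real.rpow_natCast 2 ((j + 1) * d),
        ← Real.rpow_natCast 2 d, ← Real.rpow_mul (by norm_num : (0:ℝ) ≤ 2),
        hw_def, ← Real.rpow_natCast ((2:ℝ) ^ ((d : ℝ) - s)) j,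
        ← Real.rpow_mul (by norm_num : (0:ℝ) ≤ 2),
        ← Real.rpow_add two_pos, ← Real.rpow_add two_pos]
      congr 1
      push_cast
      ring
    calc ((2 : ℝ) ^ j) ^ (-s) * (K * ((2 : ℝ) ^ (j + 1) / A) ^ d)
        = K * (A⁻¹) ^ d * (((2 : ℝ) ^ j) ^ (-s) * ((2 : ℝ) ^ ((j + 1) * d))) := by
          rw [div_pow, ← pow_mul, div_eq_mul_inv, ← inv_pow]
          ring
      _ = (K * 2 ^ d * (A⁻¹) ^ d) * w ^ j := by rw [key]; ring
  calc ∫⁻ x, ENNReal.ofReal ((1 + A * ‖(x : E) - (ξ : E)‖) ^ (-s))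
        ∂((volume : Measure E).toSphere)
      ≤ ∫⁻ x, ∑' j : ℕ, (Ej j).indicator
          (fun _ => ENNReal.ofReal (((2 : ℝ) ^ j) ^ (-s))) x
        ∂((volume : Measure E).toSphere) := lintegral_mono hpt
    _ = ∑' j : ℕ, ∫⁻ x, (Ej j).indicator
          (fun _ => ENNReal.ofReal (((2 : ℝ) ^ j) ^ (-s))) x
        ∂((volume : Measure E).toSphere) :=
        lintegral_tsum fun j => (measurable_const.indicator (hEj_meas j)).aemeasurable
    _ = ∑' j : ℕ, ENNReal.ofReal (((2 : ℝ) ^ j) ^ (-s))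
          * (volume : Measure E).toSphere (Ej j) := by
        refine tsum_congr fun j => ?_
        rw [lintegral_indicator_const (hEj_meas j)]
    _ ≤ ∑' j : ℕ, ENNReal.ofReal ((K * 2 ^ d * (A⁻¹) ^ d) * w ^ j) := by
        refine ENNReal.tsum_le_tsum fun j => ?_
        have hρ : (0 : ℝ) < 2 ^ (j + 1) / A := by positivity
        calc ENNReal.ofReal (((2 : ℝ) ^ j) ^ (-s)) * (volume : Measure E).toSphere (Ej j)
            ≤ ENNReal.ofReal (((2 : ℝ) ^ j) ^ (-s))
                * ENNReal.ofReal (K * ((2 : ℝ) ^ (j + 1) / A) ^ d) :=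
              mul_le_mul_right (cap_bound d ξ _ hρ) _
          _ = ENNReal.ofReal (((2 : ℝ) ^ j) ^ (-s) * (K * ((2 : ℝ) ^ (j + 1) / A) ^ d)) :=
              (ENNReal.ofReal_mul (by positivity)).symm
          _ = ENNReal.ofReal ((K * 2 ^ d * (A⁻¹) ^ d) * w ^ j) := by rw [hterm j]
    _ = ENNReal.ofReal (∑' j : ℕ, (K * 2 ^ d * (A⁻¹) ^ d) * w ^ j) := by
        rw [ENNReal.ofReal_tsum_of_nonneg (fun j => by positivity)
          ((summable_geometric_of_lt_one hw0.le hw1).mul_left _)]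
    _ = ENNReal.ofReal ((K * 2 ^ d * (1 - w)⁻¹) * (A⁻¹) ^ d) := by
        rw [tsum_mul_left, tsum_geometric_of_lt_one hw0.le hw1]
        congr 1
        ring

end Auxiliary

open MeasureTheory Metric

/-- **L^p-norm bound for localized kernels (Eq. (2.5) of the paper).**
If `ψ : S^d → ℝ` satisfies the localization bound
`|ψ(x)| ≤ c A^{d/2} (1 + A‖x − ξ‖)^{−η}` with `η > d`, then
`(∫_{S^d} |ψ|^p dσ_d)^{1/p} ≤ C A^{d(1/2 − 1/p)}` for a constant
`C = C(c, p, η, d) > 0` independent of `A` and `ξ`. -/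
theorem Lp_norm_bound_localized_kernel
    (d : ℕ) (hd : 1 ≤ d) (η c p : ℝ) (hη : (d : ℝ) < η) (hc : 0 < c) (hp : 1 ≤ p) :
    ∃ C > (0 : ℝ),
      ∀ (A : ℝ), 1 ≤ A →
      ∀ (ξ : sphere (0 : EuclideanSpace ℝ (Fin (d + 1))) 1)
        (ψ : sphere (0 : EuclideanSpace ℝ (Fin (d + 1))) 1 → ℝ),
        Measurable ψ →
        (∀ x : sphere (0 : EuclideanSpace ℝ (Fin (d + 1))) 1,
          |ψ x| ≤ c * A ^ ((d : ℝ) / 2) *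
            (1 + A * ‖(x : EuclideanSpace ℝ (Fin (d + 1)))
                - (ξ : EuclideanSpace ℝ (Fin (d + 1)))‖) ^ (-η)) →
        (∫ x, |ψ x| ^ p
            ∂((volume : Measure (EuclideanSpace ℝ (Fin (d + 1)))).toSphere)) ^ (1 / p)
          ≤ C * A ^ ((d : ℝ) * (1 / 2 - 1 / p)) := by
  set E := EuclideanSpace ℝ (Fin (d + 1))
  have hp0 : (0 : ℝ) < p := lt_of_lt_of_le one_pos hp
  have hd0 : (0 : ℝ) ≤ (d : ℝ) := Nat.cast_nonneg d
  have hη0 : (0 : ℝ) < η := lt_of_le_of_lt hd0 hη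
  set s : ℝ := η * p with hs_def
  have hs : (d : ℝ) < s := by
    calc (d : ℝ) < η := hη
      _ = η * 1 := (mul_one η).symm
      _ ≤ η * p := by nlinarith
  set K₂ : ℝ := (d + 1) * 2 ^ (d + 2) * sphVol d * 2 ^ d
      * (1 - (2 : ℝ) ^ ((d : ℝ) - s))⁻¹ with hK₂_def
  have hw0 : (0 : ℝ) < (2 : ℝ) ^ ((d : ℝ) - s) := Real.rpow_pos_of_pos two_pos _
  have hw1 : (2 : ℝ) ^ ((d : ℝ) - s) < 1 :=
    Real.rpow_lt_one_of_one_lt_of_neg one_lt_two (by linarith)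
  have hK₂ : 0 < K₂ := by
    have hv := sphVol_pos d
    have : (0 : ℝ) < (1 - (2 : ℝ) ^ ((d : ℝ) - s))⁻¹ := by
      apply inv_pos.2; linarith
    positivity
  refine ⟨c * K₂ ^ (1 / p), by positivity, ?_⟩
  intro A hA ξ ψ hψ hloc
  have hA0 : (0 : ℝ) < A := lt_of_lt_of_le one_pos hA
  set σd := (volume : Measure E).toSphere with hσ_def
  set M : ℝ := (c * A ^ ((d : ℝ) / 2)) ^ p with hM_def
  have hM0 : 0 ≤ M := Real.rpow_nonneg (by positivity) _
  -- pointwise bound for |ψ|^p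
  have hpt : ∀ x : sphere (0 : E) 1,
      |ψ x| ^ p ≤ M * (1 + A * ‖(x : E) - (ξ : E)‖) ^ (-s) := by
    intro x
    have hb0 : (0 : ℝ) < 1 + A * ‖(x : E) - (ξ : E)‖ := by positivity
    have h1 : |ψ x| ^ p ≤ (c * A ^ ((d : ℝ) / 2)
        * (1 + A * ‖(x : E) - (ξ : E)‖) ^ (-η)) ^ p :=
      Real.rpow_le_rpow (abs_nonneg _) (hloc x) hp0.le
    have h2 : (c * A ^ ((d : ℝ) / 2) * (1 + A * ‖(x : E) - (ξ : E)‖) ^ (-η)) ^ p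
        = M * (1 + A * ‖(x : E) - (ξ : E)‖) ^ (-s) := by
      have hexp : -η * p = -s := by rw [hs_def]; ring
      rw [Real.mul_rpow (by positivity) (Real.rpow_nonneg hb0.le _),
        ← Real.rpow_mul hb0.le, hexp, hM_def]
    linarith
  -- convert to lintegral
  have hmeas_ψp : Measurable (fun x : sphere (0 : E) 1 => |ψ x| ^ p) :=
    hψ.abs.pow measurable_const
  have hmeas_h : Measurable (fun x : sphere (0 : E) 1 =>
      (1 + A * ‖(x : E) - (ξ : E)‖) ^ (-s)) := by
    have : Continuous (fun x : sphere (0 : E) 1 => 1 + A * ‖(x : E) - (ξ : E)‖) :=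
      continuous_const.add (continuous_const.mul
        ((continuous_subtype_val.sub continuous_const).norm))
    exact this.measurable.pow measurable_const
  -- integral and lintegral
  have h_int_eq : ∫ x, |ψ x| ^ p ∂σd
      = (∫⁻ x, ENNReal.ofReal (|ψ x| ^ p) ∂σd).toReal :=
    integral_eq_lintegral_of_nonneg_ae
      (Filter.Eventually.of_forall fun x => Real.rpow_nonneg (abs_nonneg _) p)
      hmeas_ψp.aestronglyMeasurable
  have h_lint : (∫⁻ x, ENNReal.ofReal (|ψ x| ^ p) ∂σd)
      ≤ ENNReal.ofReal (M * (((d + 1) * 2 ^ (d + 2) * sphVol d * 2 ^ d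
          * (1 - (2 : ℝ) ^ ((d : ℝ) - s))⁻¹) * (A⁻¹) ^ d)) := by
    calc (∫⁻ x, ENNReal.ofReal (|ψ x| ^ p) ∂σd)
        ≤ ∫⁻ x, ENNReal.ofReal M
            * ENNReal.ofReal ((1 + A * ‖(x : E) - (ξ : E)‖) ^ (-s)) ∂σd := by
          refine lintegral_mono fun x => ?_
          rw [← ENNReal.ofReal_mul hM0]
          exact ENNReal.ofReal_le_ofReal (hpt x)
      _ = ENNReal.ofReal M
            * ∫⁻ x, ENNReal.ofReal ((1 + A * ‖(x : E) - (ξ : E)‖) ^ (-s)) ∂σd :=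
          lintegral_const_mul _ hmeas_h.ennreal_ofReal
      _ ≤ ENNReal.ofReal M * ENNReal.ofReal (((d + 1) * 2 ^ (d + 2) * sphVol d * 2 ^ d
            * (1 - (2 : ℝ) ^ ((d : ℝ) - s))⁻¹) * (A⁻¹) ^ d) :=
          mul_le_mul_right (lintegral_localized_bound d s hs A hA ξ) _
      _ = ENNReal.ofReal (M * (((d + 1) * 2 ^ (d + 2) * sphVol d * 2 ^ d
            * (1 - (2 : ℝ) ^ ((d : ℝ) - s))⁻¹) * (A⁻¹) ^ d)) :=
          (ENNReal.ofReal_mul hM0).symm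
  have h_int_le : ∫ x, |ψ x| ^ p ∂σd ≤ M * (K₂ * (A⁻¹) ^ d) := by
    rw [h_int_eq, hK₂_def]
    have := ENNReal.toReal_mono ENNReal.ofReal_ne_top h_lint
    rw [ENNReal.toReal_ofReal (by positivity)] at this
    linarith
  -- algebra for the final bound
  have e1 : M * (K₂ * (A⁻¹) ^ d) = (c ^ p * K₂) * A ^ ((d : ℝ) * p / 2 - d) := by
    have hinv : (A⁻¹) ^ d = A ^ (-(d : ℝ)) := by
      rw [inv_pow, ← Real.rpow_natCast A d, ← Real.rpow_neg hA0.le]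
    have hMsplit : M = c ^ p * A ^ ((d : ℝ) / 2 * p) := by
      rw [hM_def, Real.mul_rpow hc.le (Real.rpow_nonneg hA0.le _),
        ← Real.rpow_mul hA0.le]
    rw [hMsplit, hinv, mul_comm K₂ (A ^ (-(d : ℝ))), ← mul_assoc, mul_assoc (c ^ p),
      ← Real.rpow_add hA0]
    ring_nf
  have e2 : ((c ^ p * K₂) * A ^ ((d : ℝ) * p / 2 - d)) ^ (1 / p)
      = (c * K₂ ^ (1 / p)) * A ^ ((d : ℝ) * (1 / 2 - 1 / p)) := by
    have hcp : ((c ^ p) ^ (1 / p) : ℝ) = c := by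
      rw [← Real.rpow_mul hc.le, mul_one_div, div_self hp0.ne', Real.rpow_one]
    rw [Real.mul_rpow (by positivity) (Real.rpow_nonneg hA0.le _),
      Real.mul_rpow (by positivity) hK₂.le,
      ← Real.rpow_mul hA0.le, hcp]
    congr 1
    field_simp
  calc (∫ x, |ψ x| ^ p ∂σd) ^ (1 / p)
      ≤ (M * (K₂ * (A⁻¹) ^ d)) ^ (1 / p) :=
        Real.rpow_le_rpow (integral_nonneg fun x => Real.rpow_nonneg (abs_nonneg _) p)
          h_int_le (by positivity)
    _ = (c * K₂ ^ (1 / p)) * A ^ ((d : ℝ) * (1 / 2 - 1 / p)) := by rw [e1, e2]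
end

section
/- Let d ≥ 1 and q ≥ 2 be integers and σ_d the rotation-invariant surface measure on the unit sphere S^d ⊆ ℝ^{d+1}. Let η > d and c > 0 be reals, A ≥ 1 a real, and let ξ₁, …, ξ_q ∈ S^d be pairwise distinct points with separation Δ = min_{i ≠ i'} ‖ξ_i − ξ_{i'}‖. Suppose g₁, …, g_q : S^d → ℝ are measurable and satisfy |g_i(x)| ≤ c · A^{d/2} (1 + A·‖x − ξ_i‖)^{−η} for all x ∈ S^d and i = 1, …, q. Then there exists a constant C = C(c, q, η, d) > 0 (independent of A and of the points ξ_i) such that ∫_{S^d} ∏_{i=1}^q |g_i(x)| dσ_d(x) ≤ C · A^{d(q−2)/2} · (1 + A·Δ)^{−η(q−1)}. (This is the product-integral localization bound of Lemma 2.1 of the paper, stated with explicit localization hypotheses in place of the needlet functions.) -/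
open MeasureTheory Metric

open MeasureTheory Metric Set Module
open scoped Pointwise ENNReal

lemma cap_measure_le (d : ℕ) (ξ : EuclideanSpace ℝ (Fin (d+1))) (hξ : ‖ξ‖ = 1)
    (r : ℝ) (hr : 0 ≤ r) :
    (volume : Measure (EuclideanSpace ℝ (Fin (d+1)))).toSphere
      {x : sphere (0 : EuclideanSpace ℝ (Fin (d+1))) 1 |
        ‖(x : EuclideanSpace ℝ (Fin (d+1))) - ξ‖ ≤ r}
      ≤ ENNReal.ofReal (((d:ℝ)+1) * 2^(d+1) * r^d) := by
  let E := EuclideanSpace ℝ (Fin (d+1))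
  -- orthonormal basis with b 0 = ξ
  have hcard : finrank ℝ E = Fintype.card (Fin (d+1)) := by
    simp [E, finrank_euclideanSpace_fin]
  have horth : Orthonormal ℝ (Set.restrict {(0 : Fin (d+1))} (fun _ => ξ)) := by
    rw [orthonormal_iff_ite]
    intro i j
    have hij : i = j := Subsingleton.elim i j
    simp only [hij, if_pos rfl, Set.restrict_apply]
    rw [real_inner_self_eq_norm_sq]
    show ‖ξ‖ ^ 2 = _
    rw [hξ]
    norm_num
  obtain ⟨b, hb⟩ := horth.exists_orthonormalBasis_extension_of_card_eq hcard
  have hb0 : b 0 = ξ := hb 0 rfl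
  -- measurability of the cap
  have hmeas : MeasurableSet {x : sphere (0 : E) 1 | ‖(x : E) - ξ‖ ≤ r} := by
    have : Continuous fun x : sphere (0 : E) 1 => ‖(x : E) - ξ‖ := by fun_prop
    exact (isClosed_le this continuous_const).measurableSet
  rw [Measure.toSphere_apply' _ hmeas]
  -- the box
  set Box : Set E := b.repr ⁻¹' (((MeasurableEquiv.toLp 2 (Fin (d+1) → ℝ)).symm) ⁻¹'
      (Set.univ.pi fun i => Icc (-(if i = 0 then 1 else r)) (if i = 0 then 1 else r)))
    with hBox
  have hsub : Ioo (0:ℝ) 1 • ((↑) '' {x : sphere (0 : E) 1 | ‖(x : E) - ξ‖ ≤ r}) ⊆ Box := by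
    rintro y hy
    rw [Set.mem_smul] at hy
    obtain ⟨t, ht, z, hz, rfl⟩ := hy
    obtain ⟨x, hx, rfl⟩ := hz
    have hx1 : ‖(x : E)‖ = 1 := by
      simpa [mem_sphere_zero_iff_norm] using x.2
    have hxr : ‖(x : E) - ξ‖ ≤ r := hx
    intro i _
    simp only [Set.mem_Icc]
    have hrepr : b.repr (x : E) i = inner ℝ (b i) (x : E) := b.repr_apply_apply _ _
    have key : |b.repr (x : E) i| ≤ (if i = 0 then 1 else r) := by
      by_cases h0 : i = 0
      · subst h0
        rw [if_pos rfl, hrepr]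
        calc |inner ℝ (b 0) (x : E)| ≤ ‖b 0‖ * ‖(x : E)‖ := abs_real_inner_le_norm _ _
          _ = 1 := by rw [hb0, hξ, hx1, one_mul]
      · rw [if_neg h0, hrepr]
        have hinner0 : (inner ℝ (b i) ξ : ℝ) = 0 := by
          have h2 : (inner ℝ (b i) (b 0) : ℝ) = 0 := b.orthonormal.2 h0
          rwa [hb0] at h2
        have : (inner ℝ (b i) (x : E) : ℝ) = inner ℝ (b i) ((x : E) - ξ) := by
          rw [inner_sub_right, hinner0, sub_zero]
        rw [this]
        calc |(inner ℝ (b i) ((x : E) - ξ) : ℝ)| ≤ ‖b i‖ * ‖(x : E) - ξ‖ :=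
              abs_real_inner_le_norm _ _
          _ ≤ 1 * r := by
              apply mul_le_mul (le_of_eq (b.orthonormal.1 i)) hxr (norm_nonneg _) zero_le_one
          _ = r := one_mul r
    have hval : ((MeasurableEquiv.toLp 2 (Fin (d+1) → ℝ)).symm) (b.repr (t • (x : E))) i
        = t * b.repr (x : E) i := by
      rw [_root_.map_smul b.repr t]; rfl
    have habs : |((MeasurableEquiv.toLp 2 (Fin (d+1) → ℝ)).symm) (b.repr (t • (x : E))) i|
        ≤ (if i = 0 then 1 else r) := by
      rw [hval, abs_mul, abs_of_pos ht.1]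
      calc t * |b.repr (x : E) i| ≤ 1 * |b.repr (x : E) i| := by
            apply mul_le_mul_of_nonneg_right ht.2.le (abs_nonneg _)
        _ = |b.repr (x : E) i| := one_mul _
        _ ≤ _ := key
    exact abs_le.mp habs
  have hdim : finrank ℝ E = d + 1 := by simp [E, finrank_euclideanSpace_fin]
  calc (finrank ℝ E : ℝ≥0∞) * volume (Ioo (0:ℝ) 1 • (Subtype.val '' {x : sphere (0 : E) 1 | ‖(x : E) - ξ‖ ≤ r}))
      ≤ (finrank ℝ E : ℝ≥0∞) * volume Box := by
        exact mul_le_mul_right (measure_mono hsub) _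
    _ = ((d:ℝ≥0∞)+1) * volume Box := by rw [hdim]; norm_cast
    _ ≤ ENNReal.ofReal (((d:ℝ)+1) * 2^(d+1) * r^d) := by
        have hBoxvol : volume Box = ENNReal.ofReal 2 * (ENNReal.ofReal (2*r))^d := by
          rw [hBox]
          rw [b.measurePreserving_repr.measure_preimage]
          · rw [(EuclideanSpace.volume_preserving_symm_measurableEquiv_toLp (Fin (d+1))).measure_preimage]
            · rw [volume_pi_pi]
              rw [Fin.prod_univ_succ]
              congr 1
              · rw [if_pos rfl, Real.volume_Icc]; norm_num
              have : ∀ i : Fin d, (if (Fin.succ i) = 0 then (1:ℝ) else r) = r := by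
                intro i; rw [if_neg (Fin.succ_ne_zero i)]
              calc ∏ i : Fin d, volume (Icc (-(if (Fin.succ i) = 0 then (1:ℝ) else r)) (if (Fin.succ i) = 0 then (1:ℝ) else r))
                  = ∏ _i : Fin d, ENNReal.ofReal (2*r) := by
                    apply Finset.prod_congr rfl
                    intro i _
                    rw [this i, Real.volume_Icc]
                    congr 1; ring
                _ = (ENNReal.ofReal (2*r))^d := by
                    rw [Finset.prod_const, Finset.card_univ, Fintype.card_fin]
            · exact (MeasurableSet.univ_pi fun i => measurableSet_Icc).nullMeasurableSet
          · exact (((MeasurableEquiv.toLp 2 (Fin (d+1) → ℝ)).symm).measurable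
              (MeasurableSet.univ_pi fun i => measurableSet_Icc)).nullMeasurableSet
        rw [hBoxvol]
        rw [← ENNReal.ofReal_pow (by linarith), ← ENNReal.ofReal_mul (by norm_num)]
        have : ((d:ℝ≥0∞)+1) = ENNReal.ofReal ((d:ℝ)+1) := by
          rw [ENNReal.ofReal_add (by positivity) zero_le_one]
          simp [ENNReal.ofReal_natCast]
        rw [this, ← ENNReal.ofReal_mul (by positivity)]
        apply ENNReal.ofReal_le_ofReal
        rw [mul_pow]
        ring_nf
        nlinarith [pow_nonneg hr d, pow_pos (by norm_num : (0:ℝ) < 2) d]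
lemma decay_integral_le (d : ℕ) (η : ℝ) (hη : (d:ℝ) < η) :
    ∃ K > (0:ℝ), ∀ A : ℝ, 1 ≤ A → ∀ ξ : EuclideanSpace ℝ (Fin (d+1)), ‖ξ‖ = 1 →
      ∫⁻ x : sphere (0 : EuclideanSpace ℝ (Fin (d+1))) 1,
          ENNReal.ofReal ((1 + A * ‖(x : EuclideanSpace ℝ (Fin (d+1))) - ξ‖) ^ (-η))
          ∂((volume : Measure (EuclideanSpace ℝ (Fin (d+1)))).toSphere)
        ≤ ENNReal.ofReal (K * A ^ (-(d:ℝ))) := by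
  have hη0 : 0 < η := lt_of_le_of_lt (Nat.cast_nonneg d) hη
  set ρ : ℝ := (2:ℝ) ^ ((d:ℝ) - η) with hρdef
  have hρpos : 0 < ρ := Real.rpow_pos_of_pos two_pos _
  have hρlt : ρ < 1 := by
    rw [hρdef]
    have : ((d:ℝ) - η) < 0 := by linarith
    calc (2:ℝ) ^ ((d:ℝ) - η) < 2 ^ (0:ℝ) :=
      Real.rpow_lt_rpow_of_exponent_lt one_lt_two this
    _ = 1 := Real.rpow_zero 2
  set C₀ : ℝ := ((d:ℝ)+1) * 2^(d+1) with hC₀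
  have hC₀pos : 0 < C₀ := by positivity
  refine ⟨C₀ * 2^d * (1-ρ)⁻¹, mul_pos (mul_pos hC₀pos (by positivity)) (inv_pos.2 (by linarith)), ?_⟩
  intro A hA ξ hξ
  have hApos : (0:ℝ) < A := lt_of_lt_of_le one_pos hA
  set f : sphere (0 : EuclideanSpace ℝ (Fin (d+1))) 1 → ℝ≥0∞ :=
    fun x => ENNReal.ofReal ((1 + A * ‖(x : EuclideanSpace ℝ (Fin (d+1))) - ξ‖) ^ (-η)) with hf
  set Ek : ℕ → Set (sphere (0 : EuclideanSpace ℝ (Fin (d+1))) 1) := fun k =>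
    {x | (2:ℝ)^k - 1 ≤ A * ‖(x : EuclideanSpace ℝ (Fin (d+1))) - ξ‖ ∧
         A * ‖(x : EuclideanSpace ℝ (Fin (d+1))) - ξ‖ < 2^(k+1) - 1} with hEk
  have hEkmeas : ∀ k, MeasurableSet (Ek k) := by
    intro k
    have hcont : Continuous fun x : sphere (0 : EuclideanSpace ℝ (Fin (d+1))) 1 =>
        A * ‖(x : EuclideanSpace ℝ (Fin (d+1))) - ξ‖ := by fun_prop
    exact (hcont.measurable measurableSet_Ici).inter (hcont.measurable measurableSet_Iio)
  have hcover : (Set.univ : Set (sphere (0 : EuclideanSpace ℝ (Fin (d+1))) 1)) ⊆ ⋃ k, Ek k := by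
    intro x _
    set t := A * ‖(x : EuclideanSpace ℝ (Fin (d+1))) - ξ‖ with htdef
    have ht0 : 0 ≤ t := by positivity
    have ht1 : 1 ≤ t + 1 := by linarith
    have hfl : 1 ≤ ⌊t + 1⌋₊ := Nat.le_floor (by exact_mod_cast ht1)
    refine Set.mem_iUnion.2 ⟨Nat.log 2 ⌊t + 1⌋₊, ?_, ?_⟩
    · have h1 : (2:ℕ)^(Nat.log 2 ⌊t + 1⌋₊) ≤ ⌊t + 1⌋₊ :=
        Nat.pow_log_le_self 2 (by omega)
      have h2 : ((⌊t + 1⌋₊ : ℝ)) ≤ t + 1 := Nat.floor_le (by linarith)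
      have : ((2:ℝ))^(Nat.log 2 ⌊t + 1⌋₊) ≤ t + 1 := by
        calc ((2:ℝ))^(Nat.log 2 ⌊t + 1⌋₊) = ((2:ℕ)^(Nat.log 2 ⌊t + 1⌋₊) : ℝ) := by push_cast; ring
          _ ≤ (⌊t + 1⌋₊ : ℝ) := by exact_mod_cast h1
          _ ≤ t + 1 := h2
      linarith
    · have h1 : ⌊t + 1⌋₊ < 2^(Nat.log 2 ⌊t + 1⌋₊ + 1) := Nat.lt_pow_succ_log_self one_lt_two _
      have h2 : t + 1 < (⌊t + 1⌋₊ : ℝ) + 1 := Nat.lt_floor_add_one _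
      have h3 : (⌊t + 1⌋₊ : ℝ) + 1 ≤ ((2:ℕ)^(Nat.log 2 ⌊t + 1⌋₊ + 1) : ℝ) := by
        exact_mod_cast Nat.succ_le_of_lt h1
      have : t + 1 < ((2:ℝ))^(Nat.log 2 ⌊t + 1⌋₊ + 1) := by
        calc t + 1 < (⌊t + 1⌋₊ : ℝ) + 1 := h2
          _ ≤ ((2:ℕ)^(Nat.log 2 ⌊t + 1⌋₊ + 1) : ℝ) := h3
          _ = ((2:ℝ))^(Nat.log 2 ⌊t + 1⌋₊ + 1) := by push_cast; ring
      linarith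
  have hterm : ∀ k : ℕ, ∫⁻ x in Ek k, f x
      ∂((volume : Measure (EuclideanSpace ℝ (Fin (d+1)))).toSphere)
      ≤ ENNReal.ofReal ((C₀ * 2^d * A ^ (-(d:ℝ))) * ρ^k) := by
    intro k
    have hbnd : ∀ x ∈ Ek k, f x ≤ ENNReal.ofReal (((2:ℝ)^k) ^ (-η)) := by
      intro x hx
      apply ENNReal.ofReal_le_ofReal
      apply Real.rpow_le_rpow_of_nonpos (by positivity)
      · have := hx.1
        linarith
      · linarith
    have hEksub : Ek k ⊆ {x : sphere (0 : EuclideanSpace ℝ (Fin (d+1))) 1 |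
        ‖(x : EuclideanSpace ℝ (Fin (d+1))) - ξ‖ ≤ 2^(k+1)/A} := by
      intro x hx
      have h1 := hx.2
      have h2 : (0:ℝ) < 2^(k+1) := by positivity
      have : A * ‖(x : EuclideanSpace ℝ (Fin (d+1))) - ξ‖ ≤ 2^(k+1) := by linarith
      rw [Set.mem_setOf_eq, le_div_iff₀ hApos]
      linarith [this]
    have hmeasEk : ((volume : Measure (EuclideanSpace ℝ (Fin (d+1)))).toSphere) (Ek k)
        ≤ ENNReal.ofReal (C₀ * (2^(k+1)/A)^d) := by
      calc ((volume : Measure (EuclideanSpace ℝ (Fin (d+1)))).toSphere) (Ek k)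
          ≤ _ := measure_mono hEksub
        _ ≤ _ := cap_measure_le d ξ hξ _ (by positivity)
    calc ∫⁻ x in Ek k, f x ∂_
        ≤ ∫⁻ _x in Ek k, ENNReal.ofReal (((2:ℝ)^k) ^ (-η))
          ∂((volume : Measure (EuclideanSpace ℝ (Fin (d+1)))).toSphere) :=
          setLIntegral_mono' (hEkmeas k) hbnd
      _ = ENNReal.ofReal (((2:ℝ)^k) ^ (-η)) *
          ((volume : Measure (EuclideanSpace ℝ (Fin (d+1)))).toSphere) (Ek k) :=
          setLIntegral_const _ _
      _ ≤ ENNReal.ofReal (((2:ℝ)^k) ^ (-η)) * ENNReal.ofReal (C₀ * (2^(k+1)/A)^d) :=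
          mul_le_mul_right hmeasEk _
      _ ≤ ENNReal.ofReal ((C₀ * 2^d * A ^ (-(d:ℝ))) * ρ^k) := by
          rw [← ENNReal.ofReal_mul (Real.rpow_nonneg (by positivity) _)]
          apply ENNReal.ofReal_le_ofReal
          apply le_of_eq
          have e1 : ((2:ℝ)^k) ^ (-η) = (2:ℝ) ^ ((k:ℝ) * (-η)) := by
            rw [← Real.rpow_natCast 2 k, ← Real.rpow_mul (by norm_num)]
          have e2 : ((2:ℝ) ^ ((d:ℝ) - η))^k = (2:ℝ) ^ (((d:ℝ) - η) * (k:ℝ)) := by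
            rw [← Real.rpow_natCast ((2:ℝ) ^ ((d:ℝ) - η)) k, ← Real.rpow_mul (by norm_num)]
          have e3 : ((2:ℝ)^(k+1)/A)^d = (2:ℝ) ^ ((((k+1)*d : ℕ)):ℝ) * (A ^ ((d:ℕ):ℝ))⁻¹ := by
            rw [div_pow, ← pow_mul, Real.rpow_natCast, Real.rpow_natCast, div_eq_mul_inv]
          have e4 : A ^ (-(d:ℝ)) = (A ^ ((d:ℕ):ℝ))⁻¹ := Real.rpow_neg hApos.le _
          have e5 : (2:ℝ) ^ ((k:ℝ) * (-η)) * (2:ℝ) ^ ((((k+1)*d : ℕ)):ℝ)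
              = (2:ℝ)^d * (2:ℝ) ^ (((d:ℝ) - η) * (k:ℝ)) := by
            rw [← Real.rpow_add two_pos, ← Real.rpow_natCast 2 d, ← Real.rpow_add two_pos]
            congr 1
            push_cast
            ring
          rw [hρdef, e1, e2, e3, e4]
          linear_combination C₀ * (A ^ ((d:ℕ):ℝ))⁻¹ * e5
  calc ∫⁻ x, f x ∂((volume : Measure (EuclideanSpace ℝ (Fin (d+1)))).toSphere)
      = ∫⁻ x in Set.univ, f x
        ∂((volume : Measure (EuclideanSpace ℝ (Fin (d+1)))).toSphere) :=
        (setLIntegral_univ f).symm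
    _ ≤ ∫⁻ x in ⋃ k, Ek k, f x
        ∂((volume : Measure (EuclideanSpace ℝ (Fin (d+1)))).toSphere) :=
        lintegral_mono_set hcover
    _ ≤ ∑' k, ∫⁻ x in Ek k, f x
        ∂((volume : Measure (EuclideanSpace ℝ (Fin (d+1)))).toSphere) :=
        lintegral_iUnion_le _ _
    _ ≤ ∑' k, ENNReal.ofReal ((C₀ * 2^d * A ^ (-(d:ℝ))) * ρ^k) :=
        ENNReal.tsum_le_tsum hterm
    _ ≤ ENNReal.ofReal ((C₀ * 2^d * (1-ρ)⁻¹) * A ^ (-(d:ℝ))) := by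
        have h1 : ∀ k : ℕ, ENNReal.ofReal ((C₀ * 2^d * A ^ (-(d:ℝ))) * ρ^k)
            = ENNReal.ofReal (C₀ * 2^d * A ^ (-(d:ℝ))) * (ENNReal.ofReal ρ)^k := by
          intro k
          rw [ENNReal.ofReal_mul (by positivity), ENNReal.ofReal_pow hρpos.le]
        simp_rw [h1]
        rw [ENNReal.tsum_mul_left, ENNReal.tsum_geometric]
        have h2 : (1 - ENNReal.ofReal ρ)⁻¹ = ENNReal.ofReal ((1-ρ)⁻¹) := by
          rw [← ENNReal.ofReal_one, ← ENNReal.ofReal_sub _ hρpos.le,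
            ENNReal.ofReal_inv_of_pos (by linarith)]
        rw [h2, ← ENNReal.ofReal_mul (by positivity)]
        apply ENNReal.ofReal_le_ofReal
        apply le_of_eq
        ring

set_option maxHeartbeats 2000000 in
/-- **Product-integral localization bound (Lemma 2.1 of the paper).**
Let `ξ₁, …, ξ_q ∈ S^d` (`q ≥ 2`) be pairwise distinct points with separation
`Δ = min_{i ≠ i'} ‖ξ_i − ξ_{i'}‖`, and let `g₁, …, g_q` satisfy the localization bound
`|g_i(x)| ≤ c A^{d/2} (1 + A‖x − ξ_i‖)^{−η}` with `η > d`. Then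
`∫_{S^d} ∏ᵢ |g_i(x)| dσ_d(x) ≤ C A^{d(q−2)/2} (1 + AΔ)^{−η(q−1)}` for a constant
`C = C(c, q, η, d) > 0` independent of `A` and of the points `ξ_i`. -/
theorem product_localization_integral_bound
    (d q : ℕ) (hd : 1 ≤ d) (hq : 2 ≤ q) (η c : ℝ) (hη : (d : ℝ) < η) (hc : 0 < c) :
    ∃ C > (0 : ℝ),
      ∀ (A : ℝ), 1 ≤ A →
      ∀ (ξ : Fin q → sphere (0 : EuclideanSpace ℝ (Fin (d + 1))) 1),
        Function.Injective ξ →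
      ∀ (g : Fin q → sphere (0 : EuclideanSpace ℝ (Fin (d + 1))) 1 → ℝ),
        (∀ i, Measurable (g i)) →
        (∀ i (x : sphere (0 : EuclideanSpace ℝ (Fin (d + 1))) 1),
          |g i x| ≤ c * A ^ ((d : ℝ) / 2) *
            (1 + A * ‖(x : EuclideanSpace ℝ (Fin (d + 1)))
                - (ξ i : EuclideanSpace ℝ (Fin (d + 1)))‖) ^ (-η)) →
      ∀ (Δ : ℝ),
        Δ = ⨅ p : {p : Fin q × Fin q // p.1 ≠ p.2},
              ‖(ξ p.1.1 : EuclideanSpace ℝ (Fin (d + 1)))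
                - (ξ p.1.2 : EuclideanSpace ℝ (Fin (d + 1)))‖ →
        ∫ x, ∏ i, |g i x|
            ∂((volume : Measure (EuclideanSpace ℝ (Fin (d + 1)))).toSphere)
          ≤ C * A ^ ((d : ℝ) * ((q : ℝ) - 2) / 2) * (1 + A * Δ) ^ (-(η * ((q : ℝ) - 1))) := by
  have hη0 : 0 < η := lt_of_le_of_lt (Nat.cast_nonneg d) hη
  obtain ⟨K, hK, hKbound⟩ := decay_integral_le d η hη
  have hq0 : (0:ℝ) < (q:ℝ) := by exact_mod_cast (by omega : 0 < q)
  refine ⟨c^q * (2:ℝ)^(η*((q:ℝ)-1)) * q * K, ?_, ?_⟩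
  · apply mul_pos
    apply mul_pos
    apply mul_pos (pow_pos hc q) (Real.rpow_pos_of_pos two_pos _)
    · exact hq0
    · exact hK
  intro A hA ξ hinj g hgmeas hgbd Δ hΔ
  have hApos : (0:ℝ) < A := lt_of_lt_of_le one_pos hA
  haveI hne : Nonempty {p : Fin q × Fin q // p.1 ≠ p.2} := by
    refine ⟨⟨(⟨0, by omega⟩, ⟨1, by omega⟩), ?_⟩⟩
    intro h
    have := congrArg Fin.val h
    simp at this
  have hΔ0 : 0 ≤ Δ := by
    rw [hΔ]
    exact le_ciInf fun p => norm_nonneg _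
  have hΔle : ∀ i j, i ≠ j →
      Δ ≤ ‖(ξ i : EuclideanSpace ℝ (Fin (d+1))) - ξ j‖ := by
    intro i j hij
    have hb : BddBelow (Set.range fun p : {p : Fin q × Fin q // p.1 ≠ p.2} =>
        ‖(ξ p.1.1 : EuclideanSpace ℝ (Fin (d + 1)))
          - (ξ p.1.2 : EuclideanSpace ℝ (Fin (d + 1)))‖) := by
      refine ⟨0, ?_⟩
      rintro y ⟨p, rfl⟩
      exact norm_nonneg _
    have h2 := ciInf_le hb ⟨(i,j), hij⟩
    rw [hΔ]
    exact h2
  have h1AΔ : (0:ℝ) < 1 + A * Δ := by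
    have : 0 ≤ A * Δ := mul_nonneg hApos.le hΔ0
    linarith
  set h : Fin q → sphere (0 : EuclideanSpace ℝ (Fin (d+1))) 1 → ℝ := fun i x =>
    (1 + A * ‖(x : EuclideanSpace ℝ (Fin (d+1))) - ξ i‖) ^ (-η) with hhdef
  have hhpos : ∀ i x, 0 < h i x := by
    intro i x
    apply Real.rpow_pos_of_pos
    positivity
  set M : ℝ := (c * A^((d:ℝ)/2))^q * ((2:ℝ)^η * (1 + A*Δ)^(-η))^(q-1) with hMdef
  have hM0 : 0 ≤ M := by positivity
  -- pointwise bound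
  have hpt : ∀ x, ∏ i, |g i x| ≤ M * ∑ i, h i x := by
    intro x
    obtain ⟨i0, -, hi0⟩ := Finset.exists_min_image Finset.univ
      (fun i => ‖(x : EuclideanSpace ℝ (Fin (d+1))) - ξ i‖) ⟨⟨0, by omega⟩, Finset.mem_univ _⟩
    have hfar : ∀ i, i ≠ i0 → Δ ≤ 2 * ‖(x : EuclideanSpace ℝ (Fin (d+1))) - ξ i‖ := by
      intro i hi
      have h1 := hΔle i i0 hi
      have h2 : ‖(ξ i : EuclideanSpace ℝ (Fin (d+1))) - ξ i0‖
          ≤ ‖(x : EuclideanSpace ℝ (Fin (d+1))) - ξ i‖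
            + ‖(x : EuclideanSpace ℝ (Fin (d+1))) - ξ i0‖ := by
        calc ‖(ξ i : EuclideanSpace ℝ (Fin (d+1))) - ξ i0‖
            ≤ ‖(ξ i : EuclideanSpace ℝ (Fin (d+1))) - x‖
              + ‖(x : EuclideanSpace ℝ (Fin (d+1))) - ξ i0‖ := by
              have := dist_triangle (ξ i : EuclideanSpace ℝ (Fin (d+1)))
                (x : EuclideanSpace ℝ (Fin (d+1))) (ξ i0 : EuclideanSpace ℝ (Fin (d+1)))
              rwa [dist_eq_norm, dist_eq_norm, dist_eq_norm] at this
          _ = ‖(x : EuclideanSpace ℝ (Fin (d+1))) - ξ i‖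
              + ‖(x : EuclideanSpace ℝ (Fin (d+1))) - ξ i0‖ := by
              rw [norm_sub_rev ((ξ i : EuclideanSpace ℝ (Fin (d+1)))) (x : EuclideanSpace ℝ (Fin (d+1)))]
      have h3 := hi0 i (Finset.mem_univ i)
      linarith
    have hboundfar : ∀ i, i ≠ i0 → h i x ≤ (2:ℝ)^η * (1+A*Δ)^(-η) := by
      intro i hi
      have hfi := hfar i hi
      have hb : (1 + A*Δ)/2 ≤ 1 + A * ‖(x : EuclideanSpace ℝ (Fin (d+1))) - ξ i‖ := by
        nlinarith [mul_le_mul_of_nonneg_left hfi hApos.le]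
      calc h i x ≤ ((1+A*Δ)/2) ^ (-η) :=
            Real.rpow_le_rpow_of_nonpos (by linarith) hb (by linarith)
        _ = (2:ℝ)^η * (1+A*Δ)^(-η) := by
            rw [Real.div_rpow h1AΔ.le (by norm_num : (0:ℝ) ≤ 2),
              Real.rpow_neg (by norm_num : (0:ℝ) ≤ 2), div_eq_mul_inv, inv_inv]
            ring
    have hkey : ∏ i, h i x ≤ ((2:ℝ)^η * (1+A*Δ)^(-η))^(q-1) * ∑ i, h i x := by
      calc ∏ i, h i x
          = h i0 x * ∏ i ∈ Finset.univ.erase i0, h i x :=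
            (Finset.mul_prod_erase _ _ (Finset.mem_univ i0)).symm
        _ ≤ (∑ i, h i x) * ((2:ℝ)^η * (1+A*Δ)^(-η))^(q-1) := by
            apply mul_le_mul
            · exact Finset.single_le_sum (fun i _ => (hhpos i x).le) (Finset.mem_univ i0)
            · calc ∏ i ∈ Finset.univ.erase i0, h i x
                  ≤ ∏ _i ∈ Finset.univ.erase i0, ((2:ℝ)^η * (1+A*Δ)^(-η)) :=
                    Finset.prod_le_prod (fun i _ => (hhpos i x).le)
                      (fun i hi => hboundfar i (Finset.ne_of_mem_erase hi))
                _ = ((2:ℝ)^η * (1+A*Δ)^(-η))^(q-1) := by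
                    rw [Finset.prod_const, Finset.card_erase_of_mem (Finset.mem_univ _),
                      Finset.card_univ, Fintype.card_fin]
            · exact Finset.prod_nonneg fun i _ => (hhpos i x).le
            · exact Finset.sum_nonneg fun i _ => (hhpos i x).le
        _ = ((2:ℝ)^η * (1+A*Δ)^(-η))^(q-1) * ∑ i, h i x := mul_comm _ _
    calc ∏ i, |g i x|
        ≤ ∏ i, (c * A^((d:ℝ)/2) * h i x) :=
          Finset.prod_le_prod (fun i _ => abs_nonneg _) (fun i _ => hgbd i x)
      _ = (c * A^((d:ℝ)/2))^q * ∏ i, h i x := by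
          rw [Finset.prod_mul_distrib, Finset.prod_const, Finset.card_univ, Fintype.card_fin]
      _ ≤ (c * A^((d:ℝ)/2))^q * (((2:ℝ)^η * (1+A*Δ)^(-η))^(q-1) * ∑ i, h i x) := by
          apply mul_le_mul_of_nonneg_left hkey (by positivity)
      _ = M * ∑ i, h i x := by rw [hMdef]; ring
  -- measurability
  have hmeasprod : Measurable fun x : sphere (0 : EuclideanSpace ℝ (Fin (d+1))) 1 =>
      ∏ i, |g i x| := Finset.measurable_prod _ (fun i _ => (hgmeas i).abs)
  have hmeash : ∀ i, Measurable fun x : sphere (0 : EuclideanSpace ℝ (Fin (d+1))) 1 =>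
      ENNReal.ofReal (h i x) := by
    intro i
    have hcont : Continuous fun x : sphere (0 : EuclideanSpace ℝ (Fin (d+1))) 1 =>
        1 + A * ‖(x : EuclideanSpace ℝ (Fin (d+1))) - ξ i‖ := by fun_prop
    have : Continuous fun x : sphere (0 : EuclideanSpace ℝ (Fin (d+1))) 1 => h i x := by
      apply hcont.rpow_const
      intro x
      left
      have : (0:ℝ) < 1 + A * ‖(x : EuclideanSpace ℝ (Fin (d+1))) - ξ i‖ := by positivity
      exact ne_of_gt this
    exact this.measurable.ennreal_ofReal
  -- rewrite integral as lintegral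
  rw [integral_eq_lintegral_of_nonneg_ae
    (Filter.Eventually.of_forall fun x => Finset.prod_nonneg fun i _ => abs_nonneg _)
    hmeasprod.aestronglyMeasurable]
  -- final algebraic identity
  have key : M * ((q:ℝ) * (K * A^(-(d:ℝ))))
      = (c^q * (2:ℝ)^(η*((q:ℝ)-1)) * q * K) * A ^ ((d:ℝ)*((q:ℝ)-2)/2)
        * (1+A*Δ) ^ (-(η*((q:ℝ)-1))) := by
    have f1 : (c * A^((d:ℝ)/2))^q = c^q * A^((d:ℝ)/2*(q:ℝ)) := by
      rw [mul_pow, ← Real.rpow_natCast (A^((d:ℝ)/2)) q, ← Real.rpow_mul hApos.le]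
    have hcast : (((q-1:ℕ)):ℝ) = (q:ℝ)-1 := by
      rw [Nat.cast_sub (by omega)]; norm_num
    have f2 : ((2:ℝ)^η * (1+A*Δ)^(-η))^(q-1)
        = (2:ℝ)^(η*((q:ℝ)-1)) * (1+A*Δ)^(-(η*((q:ℝ)-1))) := by
      rw [mul_pow, ← Real.rpow_natCast ((2:ℝ)^η) (q-1),
        ← Real.rpow_natCast ((1+A*Δ)^(-η)) (q-1),
        ← Real.rpow_mul (by norm_num : (0:ℝ) ≤ 2), ← Real.rpow_mul h1AΔ.le, hcast]
      ring_nf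
    have f3 : A^((d:ℝ)/2*(q:ℝ)) * A^(-(d:ℝ)) = A^((d:ℝ)*((q:ℝ)-2)/2) := by
      rw [← Real.rpow_add hApos]; congr 1; ring
    calc M * ((q:ℝ) * (K * A^(-(d:ℝ))))
        = (c^q * (2:ℝ)^(η*((q:ℝ)-1)) * (q:ℝ) * K)
          * (A^((d:ℝ)/2*(q:ℝ)) * A^(-(d:ℝ))) * (1+A*Δ)^(-(η*((q:ℝ)-1))) := by
          rw [hMdef, f1, f2]; ring
      _ = _ := by rw [f3]
  -- bound the lintegral
  apply ENNReal.toReal_le_of_le_ofReal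
  · apply mul_nonneg
    apply mul_nonneg
    · positivity
    · exact Real.rpow_nonneg hApos.le _
    · exact Real.rpow_nonneg h1AΔ.le _
  calc ∫⁻ x, ENNReal.ofReal (∏ i, |g i x|)
        ∂((volume : Measure (EuclideanSpace ℝ (Fin (d+1)))).toSphere)
      ≤ ∫⁻ x, ENNReal.ofReal (M * ∑ i, h i x)
        ∂((volume : Measure (EuclideanSpace ℝ (Fin (d+1)))).toSphere) :=
        lintegral_mono fun x => ENNReal.ofReal_le_ofReal (hpt x)
    _ = ∫⁻ x, ENNReal.ofReal M * ∑ i, ENNReal.ofReal (h i x)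
        ∂((volume : Measure (EuclideanSpace ℝ (Fin (d+1)))).toSphere) := by
        congr 1
        funext x
        rw [ENNReal.ofReal_mul hM0, ENNReal.ofReal_sum_of_nonneg
          (fun i _ => (hhpos i x).le)]
    _ = ENNReal.ofReal M * ∑ i, ∫⁻ x, ENNReal.ofReal (h i x)
        ∂((volume : Measure (EuclideanSpace ℝ (Fin (d+1)))).toSphere) := by
        rw [lintegral_const_mul' _ _ ENNReal.ofReal_ne_top,
          lintegral_finset_sum _ (fun i _ => hmeash i)]
    _ ≤ ENNReal.ofReal M * ∑ _i : Fin q, ENNReal.ofReal (K * A^(-(d:ℝ))) := by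
        apply mul_le_mul_right
        apply Finset.sum_le_sum
        intro i _
        exact hKbound A hA (ξ i) (mem_sphere_zero_iff_norm.1 (ξ i).2)
    _ = ENNReal.ofReal M * ((q:ℝ≥0∞) * ENNReal.ofReal (K * A^(-(d:ℝ)))) := by
        rw [Finset.sum_const, Finset.card_univ, Fintype.card_fin, nsmul_eq_mul]
    _ = ENNReal.ofReal (M * ((q:ℝ) * (K * A^(-(d:ℝ))))) := by
        rw [ENNReal.ofReal_mul hM0]
        congr 1
        rw [ENNReal.ofReal_mul (by positivity : (0:ℝ) ≤ (q:ℝ)), ENNReal.ofReal_natCast]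
    _ ≤ ENNReal.ofReal ((c^q * (2:ℝ)^(η*((q:ℝ)-1)) * q * K)
          * A ^ ((d:ℝ)*((q:ℝ)-2)/2) * (1+A*Δ) ^ (-(η*((q:ℝ)-1)))) := by
        rw [key]
end
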